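/- arXiv:2101.12665 — 8 statements merged into one kernel-verified Lean document; each statement's English description precedes it below -/
import Mathlib

section
/- For every t ∈ (0,1), the series Σ_{l=2}^∞ ((l−1)(l+1)(l+2))/(l(2l+1)) · t^{2l} converges and equals (1/4)·[ (9/2) t^{−1} log((1+t)/(1−t)) + 8 log(1−t²) + (23t² − 12t⁴ − 9)/(1−t²)² ]. -/
open Real

private lemma hs_shift {f : ℕ → ℝ} {S : ℝ} (k : ℕ) (h : HasSum f S) :
    HasSum (fun n => f (n + k)) (S - ∑ i ∈ Finset.range k, f i) := by
  refine (hasSum_nat_add_iff k).mpr ?_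
  simpa using h

/-- For `t ∈ (0,1)`, the series `Σ_{l≥2} ((l−1)(l+1)(l+2))/(l(2l+1)) t^{2l}`
converges (here reindexed by `l = n + 2`, `n : ℕ`) and equals
`(1/4)[(9/2) t⁻¹ log((1+t)/(1−t)) + 8 log(1−t²) + (23t² − 12t⁴ − 9)/(1−t²)²]`. -/
theorem stmt7 (t : ℝ) (ht0 : 0 < t) (ht1 : t < 1) :
    Summable (fun n : ℕ =>
      ((((n : ℝ) + 2) - 1) * (((n : ℝ) + 2) + 1) * (((n : ℝ) + 2) + 2)) /
        (((n : ℝ) + 2) * (2 * ((n : ℝ) + 2) + 1)) * t ^ (2 * (n + 2))) ∧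
    ∑' n : ℕ,
        ((((n : ℝ) + 2) - 1) * (((n : ℝ) + 2) + 1) * (((n : ℝ) + 2) + 2)) /
          (((n : ℝ) + 2) * (2 * ((n : ℝ) + 2) + 1)) * t ^ (2 * (n + 2)) =
      (1 / 4) * ((9 / 2) * t⁻¹ * Real.log ((1 + t) / (1 - t))
        + 8 * Real.log (1 - t ^ 2)
        + (23 * t ^ 2 - 12 * t ^ 4 - 9) / (1 - t ^ 2) ^ 2) := by
  have ht : t ≠ 0 := ne_of_gt ht0
  set x : ℝ := t ^ 2 with hxdef
  have hx0 : 0 < x := pow_pos ht0 2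
  have hx1 : x < 1 := by
    nlinarith
  have hxabs : |x| < 1 := abs_lt.mpr ⟨by linarith, hx1⟩
  have hx1' : (1 : ℝ) - x ≠ 0 := by linarith
  have htabs : |t| < 1 := abs_lt.mpr ⟨by linarith, ht1⟩
  -- the four basic series
  have h1 : HasSum (fun n : ℕ => (n : ℝ) * x ^ n) (x / (1 - x) ^ 2) := by
    have := hasSum_coe_mul_geometric_of_norm_lt_one (𝕜 := ℝ) (r := x)
      (by rwa [Real.norm_eq_abs])
    simpa using this
  have h2 : HasSum (fun n : ℕ => x ^ n) (1 - x)⁻¹ :=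
    hasSum_geometric_of_lt_one (le_of_lt hx0) hx1
  have h3 : HasSum (fun n : ℕ => x ^ (n + 1) / ((n : ℝ) + 1)) (-Real.log (1 - x)) :=
    Real.hasSum_pow_div_log_of_abs_lt_one hxabs
  have h4 : HasSum (fun k : ℕ => (2 : ℝ) * (1 / (2 * (k : ℝ) + 1)) * t ^ (2 * k + 1))
      (Real.log (1 + t) - Real.log (1 - t)) :=
    Real.hasSum_log_sub_log_of_abs_lt_one htabs
  -- shifted versions
  have hA := hs_shift 2 h1
  have hB := hs_shift 2 h2
  have hC := hs_shift 1 h3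
  have hD := hs_shift 2 h4
  -- combine
  have hcomb := (((hA.mul_left (1/2)).add (hB.mul_left (3/4))).sub
      (hC.mul_left 2)).add (hD.mul_left ((9/8) * t⁻¹))
  have hkey : HasSum (fun n : ℕ =>
      ((((n : ℝ) + 2) - 1) * (((n : ℝ) + 2) + 1) * (((n : ℝ) + 2) + 2)) /
        (((n : ℝ) + 2) * (2 * ((n : ℝ) + 2) + 1)) * t ^ (2 * (n + 2)))
      (1/2 * (x / (1 - x) ^ 2 - ∑ i ∈ Finset.range 2, (i : ℝ) * x ^ i)
        + 3/4 * ((1 - x)⁻¹ - ∑ i ∈ Finset.range 2, x ^ i)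
        - 2 * (-Real.log (1 - x) - ∑ i ∈ Finset.range 1, x ^ (i + 1) / ((i : ℝ) + 1))
        + (9/8) * t⁻¹ * ((Real.log (1 + t) - Real.log (1 - t))
            - ∑ i ∈ Finset.range 2, (2 : ℝ) * (1 / (2 * (i : ℝ) + 1)) * t ^ (2 * i + 1))) := by
    refine hcomb.congr_fun fun n => ?_
    have hl : ((n : ℝ) + 2) ≠ 0 := by positivity
    have hl2 : (2 * ((n : ℝ) + 2) + 1) ≠ 0 := by positivity
    have hl5 : (2 * (n : ℝ) + 5) ≠ 0 := by positivity
    have hpow : t ^ (2 * (n + 2)) = x ^ (n + 2) := by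
      rw [hxdef, ← pow_mul, Nat.mul_comm]
    have hpow2 : t ^ (2 * (n + 2) + 1) = x ^ (n + 2) * t := by
      rw [pow_succ, hpow]
    push_cast
    rw [hpow, hpow2]
    field_simp
    ring
  refine ⟨hkey.summable, ?_⟩
  rw [hkey.tsum_eq]
  have hlog : Real.log ((1 + t) / (1 - t)) = Real.log (1 + t) - Real.log (1 - t) :=
    Real.log_div (by linarith) (by linarith)
  rw [hlog]
  simp only [Finset.sum_range_succ, Finset.sum_range_zero]
  rw [hxdef]
  push_cast
  have h1t : (1 : ℝ) - t ^ 2 ≠ 0 := by rw [← hxdef]; exact hx1'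
  field_simp
  ring
end

section
/- For every t ∈ (0,1), the series Σ_{l=2}^∞ ((l−1) l (l+2))/((l+1)(2l+1)) · t^{2l+2} converges and equals (1/4)·[ (9/2) t log((1+t)/(1−t)) + 8 log(1−t²) + t²(3t² − 1)/(1−t²)² ]. -/
open Real

/-- For `t ∈ (0,1)`, the series `Σ_{l≥2} ((l−1) l (l+2))/((l+1)(2l+1)) t^{2l+2}`
converges (here reindexed by `l = n + 2`, `n : ℕ`) and equals
`(1/4)[(9/2) t log((1+t)/(1−t)) + 8 log(1−t²) + t²(3t² − 1)/(1−t²)²]`. -/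
theorem stmt8 (t : ℝ) (ht0 : 0 < t) (ht1 : t < 1) :
    Summable (fun n : ℕ =>
      ((((n : ℝ) + 2) - 1) * ((n : ℝ) + 2) * (((n : ℝ) + 2) + 2)) /
        ((((n : ℝ) + 2) + 1) * (2 * ((n : ℝ) + 2) + 1)) * t ^ (2 * (n + 2) + 2)) ∧
    ∑' n : ℕ,
        ((((n : ℝ) + 2) - 1) * ((n : ℝ) + 2) * (((n : ℝ) + 2) + 2)) /
          ((((n : ℝ) + 2) + 1) * (2 * ((n : ℝ) + 2) + 1)) * t ^ (2 * (n + 2) + 2) =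
      (1 / 4) * ((9 / 2) * t * Real.log ((1 + t) / (1 - t))
        + 8 * Real.log (1 - t ^ 2)
        + t ^ 2 * (3 * t ^ 2 - 1) / (1 - t ^ 2) ^ 2) := by
  set x : ℝ := t ^ 2 with hx
  have hx0 : 0 ≤ x := sq_nonneg t
  have hx1 : x < 1 := by nlinarith
  have hx1' : (0:ℝ) < 1 - x := by linarith
  have habs : |x| < 1 := by rw [abs_of_nonneg hx0]; exact hx1
  have habst : |t| < 1 := by rw [abs_of_pos ht0]; exact ht1
  -- the four building-block series
  have h1 : HasSum (fun l : ℕ => (l : ℝ) * x ^ l) (x / (1 - x) ^ 2) := by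
    have := hasSum_coe_mul_geometric_of_norm_lt_one (𝕜 := ℝ) (r := x)
      (by rwa [Real.norm_eq_abs])
    exact this
  have h2 : HasSum (fun l : ℕ => x ^ l) (1 - x)⁻¹ := hasSum_geometric_of_lt_one hx0 hx1
  have h3 : HasSum (fun l : ℕ => x ^ (l + 1) / (l + 1)) (-Real.log (1 - x)) :=
    hasSum_pow_div_log_of_abs_lt_one habs
  have h4 : HasSum (fun k : ℕ => (2 : ℝ) * (1 / (2 * k + 1)) * t ^ (2 * k + 1))
      (Real.log (1 + t) - Real.log (1 - t)) := hasSum_log_sub_log_of_abs_lt_one habst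
  -- combined series
  set L : ℝ := (1/2) * (x * (x / (1 - x) ^ 2)) - (1/4) * (x * (1 - x)⁻¹)
      - 2 * (-Real.log (1 - x)) + ((9/8) * t) * (Real.log (1 + t) - Real.log (1 - t)) with hL
  have hcombo : HasSum (fun l : ℕ =>
      (1/2) * (x * ((l : ℝ) * x ^ l)) - (1/4) * (x * x ^ l)
        - 2 * (x ^ (l + 1) / (l + 1)) + ((9/8) * t) * ((2 : ℝ) * (1 / (2 * l + 1)) * t ^ (2 * l + 1))) L := by
    exact ((((h1.mul_left x).mul_left (1/2)).sub ((h2.mul_left x).mul_left (1/4))).sub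
      (h3.mul_left 2)).add (h4.mul_left ((9/8) * t))
  -- pointwise identity with the original coefficient
  have hpt : ∀ l : ℕ,
      (((l : ℝ) - 1) * (l : ℝ) * ((l : ℝ) + 2)) / (((l : ℝ) + 1) * (2 * (l : ℝ) + 1))
          * t ^ (2 * l + 2)
        = (1/2) * (x * ((l : ℝ) * x ^ l)) - (1/4) * (x * x ^ l)
            - 2 * (x ^ (l + 1) / (l + 1)) + ((9/8) * t) * ((2 : ℝ) * (1 / (2 * l + 1)) * t ^ (2 * l + 1)) := by
    intro l
    have hl1 : ((l : ℝ) + 1) ≠ 0 := by positivity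
    have hl2 : (2 * (l : ℝ) + 1) ≠ 0 := by positivity
    have hxl : x ^ l = t ^ (2 * l) := by rw [hx, ← pow_mul]
    rw [pow_succ, hxl, hx]
    field_simp
    ring
  have hf : HasSum (fun l : ℕ =>
      (((l : ℝ) - 1) * (l : ℝ) * ((l : ℝ) + 2)) / (((l : ℝ) + 1) * (2 * (l : ℝ) + 1))
        * t ^ (2 * l + 2)) L := by
    exact hcombo.congr_fun fun l => hpt l
  -- shift by 2 : the first two terms vanish
  set f : ℕ → ℝ := fun l =>
    (((l : ℝ) - 1) * (l : ℝ) * ((l : ℝ) + 2)) / (((l : ℝ) + 1) * (2 * (l : ℝ) + 1))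
      * t ^ (2 * l + 2) with hfdef
  have hshift : HasSum (fun n : ℕ => f (n + 2)) L := by
    rw [hasSum_nat_add_iff 2]
    convert hf using 1
    case e'_3 => rfl
    have h0 : f 0 = 0 := by simp [hfdef]
    have h1' : f 1 = 0 := by simp [hfdef]
    simp [Finset.sum_range_succ, h0, h1']
  have heq : (fun n : ℕ =>
      ((((n : ℝ) + 2) - 1) * ((n : ℝ) + 2) * (((n : ℝ) + 2) + 2)) /
        ((((n : ℝ) + 2) + 1) * (2 * ((n : ℝ) + 2) + 1)) * t ^ (2 * (n + 2) + 2))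
      = fun n : ℕ => f (n + 2) := by
    funext n
    simp only [hfdef]
    push_cast
    ring_nf
  rw [heq]
  refine ⟨hshift.summable, ?_⟩
  rw [hshift.tsum_eq, hL]
  have hlog : Real.log ((1 + t) / (1 - t)) = Real.log (1 + t) - Real.log (1 - t) :=
    Real.log_div (by linarith) (by linarith)
  have hlogx : Real.log (1 - t ^ 2) = Real.log (1 - x) := by rw [hx]
  rw [hlog, hlogx]
  have hxne : (1 - x) ≠ 0 := ne_of_gt hx1'
  field_simp
  ring
end

section
/- Define g₁ : (0,1) → ℝ by g₁(r) = 64π + 32π/(1−r²) − 48π r^{−1} log((1+r)/(1−r)) − 128π log(1−r²). Then g₁ is strictly increasing on (0,1), g₁(r) → 0 as r → 0⁺, and g₁(r) → +∞ as r → 1⁻. In particular, the radial function G₁(ξ) = g₁(|ξ|) on {ξ ∈ ℝ³ : 0 < |ξ| < 1} is strictly increasing in radial directions, i.e. ⟨ξ, ∇G₁(ξ)⟩ > 0 for all 0 < |ξ| < 1. -/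
open Real Filter

/-- The radial profile of the leading-order reduced Willmore energy of on-center
coordinate spheres in Schwarzschild of mass 2. -/
noncomputable def g1 (r : ℝ) : ℝ :=
  64 * π + 32 * π / (1 - r ^ 2) - 48 * π * r⁻¹ * Real.log ((1 + r) / (1 - r))
    - 128 * π * Real.log (1 - r ^ 2)

noncomputable def g1d (r : ℝ) : ℝ :=
  16 * π * (4*r^3 + 3*Real.log ((1+r)/(1-r))*(1-r^2)^2 + 16*r^3*(1-r^2) - 6*r*(1-r^2))
    / (r^2 * (1-r^2)^2)

lemma key_log {r : ℝ} (h0 : 0 ≤ r) (h1 : r < 1) :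
    2*r + 2*r^3/3 ≤ Real.log ((1+r)/(1-r)) := by
  set h : ℝ → ℝ := fun t => Real.log (1+t) - Real.log (1-t) - (2*t + 2*t^3/3) with hh
  have hder : ∀ t ∈ Set.Ico (0:ℝ) 1,
      HasDerivAt h (1/(1+t) - (-1)/(1-t) - (2*1 + 2*(3*t^2)/3)) t := by
    intro t ht
    have h1t : (0:ℝ) < 1 + t := by linarith [ht.1]
    have h2t : (0:ℝ) < 1 - t := by linarith [ht.2]
    have A : HasDerivAt (fun s : ℝ => 1 + s) 1 t := by
      simpa using (hasDerivAt_id t).const_add (1:ℝ)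
    have B : HasDerivAt (fun s : ℝ => 1 - s) (-1) t := by
      simpa using (hasDerivAt_id t).const_sub (1:ℝ)
    have hA : HasDerivAt (fun s : ℝ => Real.log (1+s)) (1/(1+t)) t := A.log h1t.ne'
    have hB : HasDerivAt (fun s : ℝ => Real.log (1-s)) ((-1)/(1-t)) t := B.log h2t.ne'
    have hC : HasDerivAt (fun s : ℝ => 2*s + 2*s^3/3) (2*1 + 2*(3*t^2)/3) t := by
      have := ((hasDerivAt_id t).const_mul (2:ℝ)).add
        ((((hasDerivAt_pow 3 t).const_mul (2:ℝ)).div_const 3))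
      exact (this.congr_deriv (by norm_num)).congr_of_eventuallyEq
        (Filter.Eventually.of_forall fun s => by simp)
    exact (hA.sub hB).sub hC
  have hmono : MonotoneOn h (Set.Ico (0:ℝ) 1) := by
    apply monotoneOn_of_deriv_nonneg (convex_Ico 0 1)
    · intro t ht
      exact (hder t ht).continuousAt.continuousWithinAt
    · rw [interior_Ico]
      intro t ht
      exact (hder t (Set.mem_Ico_of_Ioo ht)).differentiableAt.differentiableWithinAt
    · rw [interior_Ico]
      intro t ht
      rw [(hder t (Set.mem_Ico_of_Ioo ht)).deriv]
      have h1t : (0:ℝ) < 1 + t := by linarith [ht.1]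
      have h2t : (0:ℝ) < 1 - t := by linarith [ht.2]
      have : 1/(1+t) - (-1)/(1-t) - (2*1 + 2*(3*t^2)/3) = 2*t^4/((1+t)*(1-t)) := by
        field_simp
        ring
      rw [this]
      positivity
  have h2t : (0:ℝ) < 1 - r := by linarith
  have h1t : (0:ℝ) < 1 + r := by linarith
  have := hmono (Set.left_mem_Ico.2 one_pos) ⟨h0, h1⟩ h0
  simp only [hh] at this
  rw [Real.log_div h1t.ne' h2t.ne']
  norm_num at this
  linarith

lemma hasDerivAt_g1 {r : ℝ} (hr : r ∈ Set.Ioo (0:ℝ) 1) : HasDerivAt g1 (g1d r) r := by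
  obtain ⟨hr0, hr1⟩ := hr
  have h1t : (0:ℝ) < 1 + r := by linarith
  have h2t : (0:ℝ) < 1 - r := by linarith
  have hu0 : (0:ℝ) < 1 - r^2 := by nlinarith
  have hq0 : (0:ℝ) < (1+r)/(1-r) := div_pos h1t h2t
  have hu : HasDerivAt (fun t : ℝ => 1 - t^2) (-(2*r^1)) r := by
    simpa using (hasDerivAt_pow 2 r).const_sub (1:ℝ)
  have c1 : HasDerivAt (fun t : ℝ => 64*π + 32*π/(1-t^2))
      (0 + (0*(1-r^2) - 32*π*(-(2*r^1)))/(1-r^2)^2) r :=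
    (hasDerivAt_const r (64*π)).add ((hasDerivAt_const r (32*π)).div hu hu0.ne')
  have A : HasDerivAt (fun s : ℝ => 1 + s) 1 r := by
    simpa using (hasDerivAt_id r).const_add (1:ℝ)
  have B : HasDerivAt (fun s : ℝ => 1 - s) (-1) r := by
    simpa using (hasDerivAt_id r).const_sub (1:ℝ)
  have hq : HasDerivAt (fun t : ℝ => (1+t)/(1-t)) ((1*(1-r) - (1+r)*(-1))/(1-r)^2) r :=
    A.div B h2t.ne'
  have hlog : HasDerivAt (fun t : ℝ => Real.log ((1+t)/(1-t)))
      ((1*(1-r) - (1+r)*(-1))/(1-r)^2 / ((1+r)/(1-r))) r := hq.log hq0.ne'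
  have hinv : HasDerivAt (fun t : ℝ => 48*π*t⁻¹) (48*π*(-(r^2)⁻¹)) r :=
    (hasDerivAt_inv hr0.ne').const_mul (48*π)
  have hlogu : HasDerivAt (fun t : ℝ => 128*π*Real.log (1-t^2))
      (128*π*(-(2*r^1)/(1-r^2))) r := (hu.log hu0.ne').const_mul (128*π)
  have H := (c1.sub (hinv.mul hlog)).sub hlogu
  have hE : g1d r = 0 + (0*(1-r^2) - 32*π*(-(2*r^1)))/(1-r^2)^2
      - (48*π*(-(r^2)⁻¹) * Real.log ((1+r)/(1-r))
        + 48*π*r⁻¹ * ((1*(1-r) - (1+r)*(-1))/(1-r)^2 / ((1+r)/(1-r))))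
      - 128*π*(-(2*r^1)/(1-r^2)) := by
    unfold g1d
    field_simp
    ring
  rw [hE]
  exact H

lemma g1d_pos {r : ℝ} (hr : r ∈ Set.Ioo (0:ℝ) 1) : 0 < g1d r := by
  obtain ⟨hr0, hr1⟩ := hr
  have hu0 : (0:ℝ) < 1 - r^2 := by nlinarith
  have hL := key_log hr0.le hr1
  have hN : 0 < 4*r^3 + 3*Real.log ((1+r)/(1-r))*(1-r^2)^2 + 16*r^3*(1-r^2) - 6*r*(1-r^2) := by
    have key := mul_le_mul_of_nonneg_right hL (sq_nonneg (1-r^2))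
    nlinarith [pow_pos hr0 3, pow_pos hr0 5, pow_pos hr0 7, sq_nonneg (1-r^2)]
  have h16 : (0:ℝ) < 16*π := by positivity
  exact div_pos (mul_pos h16 hN) (by positivity)

lemma g1_strictMono : StrictMonoOn g1 (Set.Ioo (0:ℝ) 1) := by
  apply strictMonoOn_of_deriv_pos (convex_Ioo 0 1)
  · intro t ht
    exact (hasDerivAt_g1 ht).continuousAt.continuousWithinAt
  · rw [interior_Ioo]
    intro t ht
    rw [(hasDerivAt_g1 ht).deriv]
    exact g1d_pos ht

lemma g1_tendsto_zero : Tendsto g1 (nhdsWithin 0 (Set.Ioi 0)) (nhds 0) := by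
  have T1 : Tendsto (fun r : ℝ => 32*π/(1-r^2)) (nhdsWithin 0 (Set.Ioi 0)) (nhds (32*π)) := by
    have hc : ContinuousAt (fun r : ℝ => 32*π/(1-r^2)) 0 :=
      ContinuousAt.div continuousAt_const (by fun_prop) (by norm_num)
    have h' : Tendsto (fun r : ℝ => 32*π/(1-r^2)) (nhdsWithin 0 (Set.Ioi 0))
        (nhds (32*π/(1-(0:ℝ)^2))) := hc.tendsto.mono_left nhdsWithin_le_nhds
    simpa using h'
  have T3 : Tendsto (fun r : ℝ => Real.log (1-r^2)) (nhdsWithin 0 (Set.Ioi 0)) (nhds 0) := by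
    have hc : ContinuousAt (fun r : ℝ => Real.log (1-r^2)) 0 := by
      apply ContinuousAt.comp (Real.continuousAt_log (by norm_num)) (by fun_prop)
    have h' : Tendsto (fun r : ℝ => Real.log (1-r^2)) (nhdsWithin 0 (Set.Ioi 0))
        (nhds (Real.log (1-(0:ℝ)^2))) := hc.tendsto.mono_left nhdsWithin_le_nhds
    simpa using h'
  have T2 : Tendsto (fun r : ℝ => r⁻¹ * Real.log ((1+r)/(1-r)))
      (nhdsWithin 0 (Set.Ioi 0)) (nhds 2) := by
    have hA : HasDerivAt (fun s : ℝ => 1 + s) 1 (0:ℝ) := by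
      simpa using (hasDerivAt_id (0:ℝ)).const_add (1:ℝ)
    have hB : HasDerivAt (fun s : ℝ => 1 - s) (-1) (0:ℝ) := by
      simpa using (hasDerivAt_id (0:ℝ)).const_sub (1:ℝ)
    have hq : HasDerivAt (fun t : ℝ => (1+t)/(1-t))
        ((1*(1-(0:ℝ)) - (1+0)*(-1))/(1-(0:ℝ))^2) 0 := hA.div hB (by norm_num)
    have hlog : HasDerivAt (fun t : ℝ => Real.log ((1+t)/(1-t))) 2 0 := by
      have := hq.log (by norm_num : ((1+(0:ℝ))/(1-0)) ≠ 0)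
      norm_num at this
      exact this
    have hslope := hasDerivAt_iff_tendsto_slope.1 hlog
    have hmono : nhdsWithin (0:ℝ) (Set.Ioi 0) ≤ nhdsWithin 0 {0}ᶜ :=
      nhdsWithin_mono 0 (fun x hx => ne_of_gt hx)
    have := hslope.mono_left hmono
    apply this.congr
    intro r
    rw [slope_def_field]
    norm_num
    rw [inv_mul_eq_div]
  have := ((((tendsto_const_nhds (x := (64:ℝ)*π)).add T1).sub
    (T2.const_mul (48*π))).sub (T3.const_mul (128*π)))
  have final : Tendsto g1 (nhdsWithin 0 (Set.Ioi 0))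
      (nhds (64*π + 32*π - 48*π*2 - 128*π*0)) :=
    this.congr (fun r => by unfold g1; ring)
  rw [show (64*π + 32*π - 48*π*2 - 128*π*0 : ℝ) = 0 by ring] at final
  exact final

lemma g1_tendsto_atTop : Tendsto g1 (nhdsWithin 1 (Set.Iio 1)) atTop := by
  have hmem : Set.Ioo (1/2 : ℝ) 1 ∈ nhdsWithin (1:ℝ) (Set.Iio 1) := by
    rw [mem_nhdsWithin]
    exact ⟨Set.Ioi (1/2), isOpen_Ioi, by norm_num, by
      intro x hx; exact ⟨hx.1, hx.2⟩⟩
  have hbound : ∀ r ∈ Set.Ioo (1/2 : ℝ) 1,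
      64*π - 224*π*Real.log 2 + 32*π/(1-r^2) ≤ g1 r := by
    intro r hr
    obtain ⟨hr0, hr1⟩ := hr
    have h1t : (0:ℝ) < 1 + r := by linarith
    have h2t : (0:ℝ) < 1 - r := by linarith
    have hpi : (0:ℝ) < π := Real.pi_pos
    have e1 : Real.log ((1+r)/(1-r)) = Real.log (1+r) - Real.log (1-r) :=
      Real.log_div h1t.ne' h2t.ne'
    have e2 : Real.log (1-r^2) = Real.log (1-r) + Real.log (1+r) := by
      rw [show (1:ℝ) - r^2 = (1-r)*(1+r) by ring, Real.log_mul h2t.ne' h1t.ne']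
    have hX : 0 ≤ Real.log (1+r) - Real.log (1-r) := by
      have : Real.log (1-r) ≤ Real.log (1+r) := Real.log_le_log h2t (by linarith)
      linarith
    have hrinv : r⁻¹ ≤ 2 := by
      rw [inv_le_comm₀ (by linarith) (by norm_num)]
      linarith
    have hrinv0 : 0 ≤ r⁻¹ := by positivity
    have hlog2 : Real.log (1+r) ≤ Real.log 2 := Real.log_le_log h1t (by linarith)
    have hlogneg : Real.log (1-r) ≤ 0 := Real.log_nonpos h2t.le (by linarith)
    have hlogpos : 0 ≤ Real.log (1+r) := Real.log_nonneg (by linarith)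
    unfold g1
    rw [e1, e2]
    have key : 48*π*r⁻¹ * (Real.log (1+r) - Real.log (1-r))
        ≤ 96*π * (Real.log 2 - Real.log (1-r)) := by
      have h1 : 48*π*r⁻¹ * (Real.log (1+r) - Real.log (1-r))
          ≤ 48*π*2 * (Real.log (1+r) - Real.log (1-r)) := by
        apply mul_le_mul_of_nonneg_right _ hX
        have : (48:ℝ)*π > 0 := by positivity
        nlinarith
      have h2 : 96*π * (Real.log (1+r) - Real.log (1-r))
          ≤ 96*π * (Real.log 2 - Real.log (1-r)) := by
        apply mul_le_mul_of_nonneg_left _ (by positivity)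
        linarith
      linarith
    nlinarith [mul_le_mul_of_nonneg_left hlog2 (show (0:ℝ) ≤ 128*π by positivity),
      mul_nonneg (mul_nonneg (show (0:ℝ) ≤ 32 by norm_num) hpi.le) (neg_nonneg.2 hlogneg)]
  have hT : Tendsto (fun r : ℝ => 64*π - 224*π*Real.log 2 + 32*π/(1-r^2))
      (nhdsWithin 1 (Set.Iio 1)) atTop := by
    apply tendsto_atTop_add_const_left
    have hsq : Tendsto (fun r : ℝ => 1 - r^2) (nhdsWithin 1 (Set.Iio 1))
        (nhdsWithin 0 (Set.Ioi 0)) := by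
      rw [tendsto_nhdsWithin_iff]
      constructor
      · have hc : ContinuousAt (fun r : ℝ => 1 - r^2) 1 := by fun_prop
        have h' : Tendsto (fun r : ℝ => 1 - r^2) (nhdsWithin 1 (Set.Iio 1))
            (nhds (1-(1:ℝ)^2)) := hc.tendsto.mono_left nhdsWithin_le_nhds
        simpa using h'
      · have : Set.Ioo (-1 : ℝ) 1 ∈ nhdsWithin (1:ℝ) (Set.Iio 1) := by
          rw [mem_nhdsWithin]
          exact ⟨Set.Ioi (-1), isOpen_Ioi, by norm_num, fun x hx => ⟨hx.1, hx.2⟩⟩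
        filter_upwards [this] with r hr
        have := hr.1; have := hr.2
        simp only [Set.mem_Ioi]
        nlinarith
    have := (tendsto_inv_nhdsGT_zero.comp hsq).const_mul_atTop
      (show (0:ℝ) < 32*π by positivity)
    apply this.congr
    intro r
    simp [div_eq_mul_inv, Function.comp]
  apply tendsto_atTop_mono' _ _ hT
  filter_upwards [hmem] with r hr
  exact hbound r hr

/-- `g₁` is strictly increasing on `(0,1)`, tends to `0` at `0⁺` and to `+∞` at `1⁻`;
consequently the radial function `G₁(ξ) = g₁(|ξ|)` is strictly increasing in radial
directions: `⟨ξ, ∇G₁(ξ)⟩ > 0` for `0 < |ξ| < 1`. -/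
theorem stmt9 :
    StrictMonoOn g1 (Set.Ioo 0 1) ∧
    Tendsto g1 (nhdsWithin 0 (Set.Ioi 0)) (nhds 0) ∧
    Tendsto g1 (nhdsWithin 1 (Set.Iio 1)) atTop ∧
    ∀ ξ : EuclideanSpace ℝ (Fin 3), 0 < ‖ξ‖ → ‖ξ‖ < 1 →
      0 < (inner ℝ ξ (gradient (fun η : EuclideanSpace ℝ (Fin 3) => g1 ‖η‖) ξ) : ℝ) := by
  refine ⟨g1_strictMono, g1_tendsto_zero, g1_tendsto_atTop, ?_⟩
  intro ξ hξ0 hξ1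
  set r := ‖ξ‖ with hr
  have hr2 : (0:ℝ) < r^2 := by positivity
  have hsqrt : Real.sqrt (r^2) = r := Real.sqrt_sq hξ0.le
  -- inner product self fderiv
  have hinner : HasFDerivAt (fun η : EuclideanSpace ℝ (Fin 3) => (inner ℝ η η : ℝ))
      ((fderivInnerCLM ℝ (ξ, ξ)).comp ((ContinuousLinearMap.id ℝ _).prod
        (ContinuousLinearMap.id ℝ _))) ξ :=
    (hasFDerivAt_id ξ).inner ℝ (hasFDerivAt_id ξ)
  have hsq : HasDerivAt Real.sqrt (1/(2*Real.sqrt (r^2))) ((inner ℝ ξ ξ : ℝ)) := by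
    rw [real_inner_self_eq_norm_sq]
    exact Real.hasDerivAt_sqrt hr2.ne'
  have hg : HasDerivAt g1 (g1d r) (Real.sqrt ((inner ℝ ξ ξ : ℝ))) := by
    rw [real_inner_self_eq_norm_sq, hsqrt]
    exact hasDerivAt_g1 ⟨hξ0, hξ1⟩
  have hcomp : HasDerivAt (fun t : ℝ => g1 (Real.sqrt t))
      (g1d r * (1/(2*Real.sqrt (r^2)))) ((inner ℝ ξ ξ : ℝ)) := hg.comp _ hsq
  have hF : HasFDerivAt (fun η : EuclideanSpace ℝ (Fin 3) => g1 ‖η‖)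
      ((g1d r * (1/(2*Real.sqrt (r^2)))) •
        ((fderivInnerCLM ℝ (ξ, ξ)).comp ((ContinuousLinearMap.id ℝ _).prod
          (ContinuousLinearMap.id ℝ _)))) ξ := by
    have := HasDerivAt.comp_hasFDerivAt
      (f := fun η : EuclideanSpace ℝ (Fin 3) => (inner ℝ η η : ℝ)) ξ hcomp hinner
    apply this.congr_of_eventuallyEq
    filter_upwards with η
    simp only [Function.comp]
    rw [real_inner_self_eq_norm_sq, Real.sqrt_sq (norm_nonneg η)]
  have hGrad : HasGradientAt (fun η : EuclideanSpace ℝ (Fin 3) => g1 ‖η‖)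
      ((g1d r / r) • ξ) ξ := by
    rw [hasGradientAt_iff_hasFDerivAt]
    refine hF.congr_fderiv ?_
    symm
    apply ContinuousLinearMap.ext
    intro v
    simp only [InnerProductSpace.toDual_apply_apply, ContinuousLinearMap.smul_apply,
      ContinuousLinearMap.comp_apply, ContinuousLinearMap.prod_apply,
      ContinuousLinearMap.id_apply, fderivInnerCLM_apply, real_inner_smul_left]
    rw [real_inner_comm v ξ, hsqrt]
    field_simp
    rw [smul_eq_mul, div_mul_eq_mul_div, mul_div_assoc', mul_div_mul_left _ _ hξ0.ne']
    ring
  rw [hGrad.gradient]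
  rw [real_inner_smul_right, real_inner_self_eq_norm_sq, ← hr]
  have := g1d_pos (show r ∈ Set.Ioo (0:ℝ) 1 from ⟨hξ0, hξ1⟩)
  have : 0 < g1d r / r := by positivity
  nlinarith
end

section
/- Let χ : ℝ³ → ℝ be defined by χ(y) = exp(−(1−|y|²)^{−1}) for |y| < 1 and χ(y) = 0 for |y| ≥ 1. Then for every y with |y| < 1, the Euclidean Laplacian of χ satisfies (Δ̄χ)(y) = 2 χ(y) (4|y|² + |y|⁴ − 3)/(1−|y|²)⁴. In particular, χ is strictly subharmonic on the spherical shell {y ∈ ℝ³ : √3/2 < |y| < 1}, i.e. (Δ̄χ)(y) > 0 there. -/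
open Real
open scoped Classical
open scoped RealInnerProductSpace

noncomputable def bump (y : EuclideanSpace ℝ (Fin 3)) : ℝ :=
  if ‖y‖ < 1 then Real.exp (-(1 - ‖y‖ ^ 2)⁻¹) else 0

namespace BumpAux

abbrev E3 := EuclideanSpace ℝ (Fin 3)

lemma ev_ball {y : E3} (hy : ‖y‖ < 1) : ∀ᶠ z in nhds y, ‖z‖ < 1 :=
  (isOpen_lt continuous_norm continuous_const).eventually_mem hy

lemma one_sub_ne {z : E3} (hz : ‖z‖ < 1) : (1 : ℝ) - ‖z‖ ^ 2 ≠ 0 := by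
  have h := norm_nonneg z
  nlinarith

lemma hasF {z : E3} (hz : ‖z‖ < 1) :
    HasFDerivAt (fun w : E3 => Real.exp (-(1 - ‖w‖ ^ 2)⁻¹))
      (Real.exp (-(1 - ‖z‖ ^ 2)⁻¹) •
        -(-(((1 - ‖z‖ ^ 2) ^ 2)⁻¹) •
          -((fderivInnerCLM ℝ (z, z)).comp
            ((ContinuousLinearMap.id ℝ E3).prod (ContinuousLinearMap.id ℝ E3))))) z := by
  have hn0 : HasFDerivAt (fun w : E3 => ⟪w, w⟫)
      ((fderivInnerCLM ℝ (z, z)).comp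
        ((ContinuousLinearMap.id ℝ E3).prod (ContinuousLinearMap.id ℝ E3))) z :=
    (hasFDerivAt_id z).inner ℝ (hasFDerivAt_id z)
  have hn : HasFDerivAt (fun w : E3 => ‖w‖ ^ 2)
      ((fderivInnerCLM ℝ (z, z)).comp
        ((ContinuousLinearMap.id ℝ E3).prod (ContinuousLinearMap.id ℝ E3))) z := by
    simpa only [real_inner_self_eq_norm_sq] using hn0
  have h1 := hn.const_sub 1
  have h2 := (hasDerivAt_inv (one_sub_ne hz)).comp_hasFDerivAt z h1
  exact h2.neg.exp

lemma fderiv_bump {z : E3} (hz : ‖z‖ < 1) (v : E3) :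
    fderiv ℝ bump z v =
      (-2) * Real.exp (-(1 - ‖z‖ ^ 2)⁻¹) * ((1 - ‖z‖ ^ 2) ^ 2)⁻¹ * ⟪z, v⟫ := by
  have he : bump =ᶠ[nhds z] fun w : E3 => Real.exp (-(1 - ‖w‖ ^ 2)⁻¹) :=
    (ev_ball hz).mono fun w hw => by simp [bump, hw]
  rw [Filter.EventuallyEq.fderiv_eq he, (hasF hz).fderiv]
  simp only [ContinuousLinearMap.smul_apply, ContinuousLinearMap.neg_apply,
    ContinuousLinearMap.comp_apply, ContinuousLinearMap.prod_apply,
    ContinuousLinearMap.id_apply, fderivInnerCLM_apply, smul_eq_mul]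
  rw [real_inner_comm v z]
  ring


lemma hasNorm (y : E3) : HasFDerivAt (fun w : E3 => ‖w‖ ^ 2)
    ((fderivInnerCLM ℝ (y, y)).comp
      ((ContinuousLinearMap.id ℝ E3).prod (ContinuousLinearMap.id ℝ E3))) y := by
  simpa only [real_inner_self_eq_norm_sq, id_eq] using
    (hasFDerivAt_id y).inner ℝ (hasFDerivAt_id y)

lemma fderiv2 {y : E3} (hy : ‖y‖ < 1) (i : Fin 3) :
    fderiv ℝ (fun z : E3 => fderiv ℝ bump z (EuclideanSpace.single i 1)) y
        (EuclideanSpace.single i 1) =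
      Real.exp (-(1 - ‖y‖ ^ 2)⁻¹) *
        (4 * (y i * y i) * ((1 - ‖y‖ ^ 2) ^ 4)⁻¹ -
          8 * (y i * y i) * ((1 - ‖y‖ ^ 2) ^ 3)⁻¹ - 2 * ((1 - ‖y‖ ^ 2) ^ 2)⁻¹) := by
  have hne := one_sub_ne hy
  have he : (fun z : E3 => fderiv ℝ bump z (EuclideanSpace.single i 1)) =ᶠ[nhds y]
      fun z : E3 => (-2 : ℝ) *
        (Real.exp (-(1 - ‖z‖ ^ 2)⁻¹) * (((1 - ‖z‖ ^ 2) * (1 - ‖z‖ ^ 2))⁻¹ * z i)) := by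
    refine (ev_ball hy).mono fun z hz => ?_
    dsimp only
    rw [fderiv_bump hz]
    rw [EuclideanSpace.inner_single_right]
    simp only [starRingEnd_apply, star_trivial]
    ring
  rw [Filter.EventuallyEq.fderiv_eq he]
  have h1 := (hasNorm y).const_sub 1
  have hq0 := h1.mul h1
  have hq := (hasDerivAt_inv (mul_ne_zero hne hne)).comp_hasFDerivAt y hq0
  simp only [Function.comp_def] at hq
  have hp : HasFDerivAt (fun z : E3 => z i) (EuclideanSpace.proj i : E3 →L[ℝ] ℝ) y :=
    (EuclideanSpace.proj i : E3 →L[ℝ] ℝ).hasFDerivAt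
  have hmul1 := hq.mul hp
  have hmul2 := (hasF hy).mul hmul1
  have hh := hmul2.const_mul (-2 : ℝ)
  simp only [Pi.mul_apply] at hh
  rw [hh.fderiv]
  simp only [ContinuousLinearMap.smul_apply, ContinuousLinearMap.add_apply,
    ContinuousLinearMap.neg_apply, ContinuousLinearMap.comp_apply,
    ContinuousLinearMap.prod_apply, ContinuousLinearMap.id_apply,
    fderivInnerCLM_apply, smul_eq_mul, PiLp.proj_apply,
    EuclideanSpace.inner_single_right, EuclideanSpace.inner_single_left,
    EuclideanSpace.single_apply, if_pos rfl, if_true, conj_trivial]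
  field_simp
  ring


lemma sum_sq (y : E3) : ∑ i : Fin 3, y i * y i = ‖y‖ ^ 2 := by
  rw [EuclideanSpace.norm_sq_eq]
  simp only [Real.norm_eq_abs, sq_abs, sq, abs_mul_abs_self]

lemma lap_eq {y : E3} (hy : ‖y‖ < 1) :
    ∑ i : Fin 3,
        fderiv ℝ (fun z : E3 => fderiv ℝ bump z (EuclideanSpace.single i 1)) y
          (EuclideanSpace.single i 1) =
      2 * bump y * (4 * ‖y‖ ^ 2 + ‖y‖ ^ 4 - 3) / (1 - ‖y‖ ^ 2) ^ 4 := by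
  have hne := one_sub_ne hy
  have hb : bump y = Real.exp (-(1 - ‖y‖ ^ 2)⁻¹) := if_pos hy
  calc ∑ i : Fin 3,
        fderiv ℝ (fun z : E3 => fderiv ℝ bump z (EuclideanSpace.single i 1)) y
          (EuclideanSpace.single i 1)
      = ∑ i : Fin 3, Real.exp (-(1 - ‖y‖ ^ 2)⁻¹) *
          (4 * (y i * y i) * ((1 - ‖y‖ ^ 2) ^ 4)⁻¹ -
            8 * (y i * y i) * ((1 - ‖y‖ ^ 2) ^ 3)⁻¹ - 2 * ((1 - ‖y‖ ^ 2) ^ 2)⁻¹) :=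
        Finset.sum_congr rfl fun i _ => fderiv2 hy i
    _ = ∑ i : Fin 3,
          ((Real.exp (-(1 - ‖y‖ ^ 2)⁻¹) * 4 * ((1 - ‖y‖ ^ 2) ^ 4)⁻¹) * (y i * y i) -
            (Real.exp (-(1 - ‖y‖ ^ 2)⁻¹) * 8 * ((1 - ‖y‖ ^ 2) ^ 3)⁻¹) * (y i * y i) -
            Real.exp (-(1 - ‖y‖ ^ 2)⁻¹) * 2 * ((1 - ‖y‖ ^ 2) ^ 2)⁻¹) :=
        Finset.sum_congr rfl fun i _ => by ring
    _ = (Real.exp (-(1 - ‖y‖ ^ 2)⁻¹) * 4 * ((1 - ‖y‖ ^ 2) ^ 4)⁻¹) * (∑ i : Fin 3, y i * y i) -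
          (Real.exp (-(1 - ‖y‖ ^ 2)⁻¹) * 8 * ((1 - ‖y‖ ^ 2) ^ 3)⁻¹) * (∑ i : Fin 3, y i * y i) -
          3 * (Real.exp (-(1 - ‖y‖ ^ 2)⁻¹) * 2 * ((1 - ‖y‖ ^ 2) ^ 2)⁻¹) := by
        rw [Finset.sum_sub_distrib, Finset.sum_sub_distrib, ← Finset.mul_sum, ← Finset.mul_sum,
          Finset.sum_const]
        simp
    _ = 2 * bump y * (4 * ‖y‖ ^ 2 + ‖y‖ ^ 4 - 3) / (1 - ‖y‖ ^ 2) ^ 4 := by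
        rw [sum_sq, hb]
        field_simp
        ring

end BumpAux

/-- Formula for the Euclidean Laplacian of the standard bump function on the open unit
ball, and its strict subharmonicity on the shell `√3/2 < |y| < 1`. -/
theorem stmt12 :
    (∀ y : EuclideanSpace ℝ (Fin 3), ‖y‖ < 1 →
      ∑ i : Fin 3,
          fderiv ℝ (fun z : EuclideanSpace ℝ (Fin 3) =>
            fderiv ℝ bump z (EuclideanSpace.single i 1)) y (EuclideanSpace.single i 1) =
        2 * bump y * (4 * ‖y‖ ^ 2 + ‖y‖ ^ 4 - 3) / (1 - ‖y‖ ^ 2) ^ 4) ∧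
    ∀ y : EuclideanSpace ℝ (Fin 3), Real.sqrt 3 / 2 < ‖y‖ → ‖y‖ < 1 →
      0 < ∑ i : Fin 3,
          fderiv ℝ (fun z : EuclideanSpace ℝ (Fin 3) =>
            fderiv ℝ bump z (EuclideanSpace.single i 1)) y (EuclideanSpace.single i 1) := by
  constructor
  · exact fun y hy => BumpAux.lap_eq hy
  · intro y hlo hy
    rw [BumpAux.lap_eq hy]
    have hb : bump y = Real.exp (-(1 - ‖y‖ ^ 2)⁻¹) := if_pos hy
    have hbpos : 0 < bump y := hb ▸ Real.exp_pos _
    have h34 : (3 : ℝ) / 4 < ‖y‖ ^ 2 := by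
      have h0 : (0 : ℝ) ≤ Real.sqrt 3 / 2 := by positivity
      have := pow_lt_pow_left₀ hlo h0 (n := 2) (by norm_num)
      calc (3 : ℝ) / 4 = (Real.sqrt 3 / 2) ^ 2 := by
            rw [div_pow, Real.sq_sqrt (by norm_num : (3:ℝ) ≥ 0)]; norm_num
        _ < ‖y‖ ^ 2 := this
    have h1 : ‖y‖ ^ 2 < 1 := by nlinarith [norm_nonneg y]
    apply div_pos
    · have h4 : (0:ℝ) ≤ ‖y‖ ^ 4 := by positivity
      have : (0:ℝ) < 4 * ‖y‖ ^ 2 + ‖y‖ ^ 4 - 3 := by linarith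
      exact mul_pos (mul_pos two_pos hbpos) this
    · have : (0:ℝ) < 1 - ‖y‖ ^ 2 := by linarith
      positivity
end

section
/- Let a ∈ (0,1), let ζ ∈ (0,π), and let θ ∈ (0,π/2) satisfy cos θ > a and sin θ (cos ζ + a) = sin ζ (cos θ − a). Set t = sin ζ / sin θ. Then t > 1 and (1 + a cos ζ) cos θ ≥ t cos ζ (1 − a cos θ). -/
open Real

set_option maxHeartbeats 1000000 in
/-- The elementary trigonometric comparison underlying the reflection argument:
if `a ∈ (0,1)`, `ζ ∈ (0,π)`, `θ ∈ (0,π/2)` with `cos θ > a` and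
`sin θ (cos ζ + a) = sin ζ (cos θ − a)`, then `t = sin ζ / sin θ > 1` and
`(1 + a cos ζ) cos θ ≥ t cos ζ (1 − a cos θ)`. -/
theorem stmt13 (a ζ θ : ℝ) (ha0 : 0 < a) (ha1 : a < 1)
    (hζ0 : 0 < ζ) (hζπ : ζ < π) (hθ0 : 0 < θ) (hθ : θ < π / 2)
    (hcos : a < Real.cos θ)
    (heq : Real.sin θ * (Real.cos ζ + a) = Real.sin ζ * (Real.cos θ - a)) :
    1 < Real.sin ζ / Real.sin θ ∧
    (Real.sin ζ / Real.sin θ) * Real.cos ζ * (1 - a * Real.cos θ) ≤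
      (1 + a * Real.cos ζ) * Real.cos θ := by
  set s := Real.sin θ with hs
  set c := Real.cos θ with hc
  set S := Real.sin ζ with hS
  set z := Real.cos ζ with hz
  have hs0 : 0 < s := Real.sin_pos_of_pos_of_lt_pi hθ0
    (lt_trans hθ (by linarith [Real.pi_pos]))
  have hS0 : 0 < S := Real.sin_pos_of_pos_of_lt_pi hζ0 hζπ
  have hc0 : 0 < c := lt_trans ha0 hcos
  have hp1 : s ^ 2 + c ^ 2 = 1 := by
    rw [hs, hc]; exact Real.sin_sq_add_cos_sq θ
  have hp2 : S ^ 2 + z ^ 2 = 1 := by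
    rw [hS, hz]; exact Real.sin_sq_add_cos_sq ζ
  -- key polynomial relation: s*z = S*(c-a) - a*s
  have hsz : s * z = S * (c - a) - a * s := by linarith [heq]
  have hQ : (1 - 2*a*c + a^2) * S^2 = 2*a*(c-a)*S*s + (1-a^2)*s^2 := by
    linear_combination s^2 * hp2 + (-(s*z + S*(c-a) - a*s)) * hsz - S^2 * hp1
  have hQpos : 0 < 1 - 2*a*c + a^2 := by nlinarith [hp1, sq_nonneg s]
  have hSs : s < S := by
    by_contra h
    push_neg at h
    have h2 : S^2 ≤ s^2 := by nlinarith
    have h3 : (1 - 2*a*c + a^2) * (S^2 - s^2) = 2*a*(c-a)*s*(S+s) := by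
      linear_combination hQ
    have h4 : 0 < 2*a*(c-a)*s*(S+s) :=
      mul_pos (mul_pos (mul_pos (by linarith) (by linarith)) hs0) (by linarith)
    nlinarith [mul_nonneg hQpos.le (sub_nonneg.mpr h2)]
  refine ⟨(one_lt_div hs0).mpr hSs, ?_⟩
  rw [div_mul_eq_mul_div, div_mul_eq_mul_div, div_le_iff₀ hs0]
  -- goal: S * z * (1 - a*c) ≤ (1 + a*z)*c*s
  have e2 : (1 - 2*a*c + a^2) * (s * ((1 + a*z)*c*s - S*z*(1-a*c))) =
      a*(1-a^2)*s^3*(s+S) := by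
    linear_combination ((1 - 2*a*c + a^2)*(a*c*s - S*(1-a*c))) * hsz
      - ((c-a)*(1-a*c)) * hQ - (a*(1-a^2)*(s^2+S*s)) * hp1
  have hpos : 0 < a*(1-a^2)*s^3*(s+S) := by
    have : 0 < 1 - a^2 := by nlinarith
    positivity
  nlinarith [e2, mul_pos hQpos hs0]
end

section
/- Let r₀ > 0 and let u : ℝ³ → ℝ be continuously differentiable on {x ∈ ℝ³ : |x| ≥ r₀} with u(x) → 0 as |x| → ∞. Suppose there is a bounded function ε : [r₀,∞) → [0,∞) such that ⟨x, ∇u(x)⟩ ≤ ε(|x|) |x|^{−2} for all x with |x| ≥ r₀. Then for every x with |x| ≥ r₀ one has u(x) ≥ −(1/(2|x|²)) · sup_{s ≥ |x|} ε(s). -/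
open Real Filter

/-- If `u` is `C¹` on `{|x| ≥ r₀}`, tends to `0` at infinity, and its radial derivative
satisfies `⟨x, ∇u(x)⟩ ≤ ε(|x|)|x|⁻²` with `ε ≥ 0` bounded, then
`u(x) ≥ −(1/(2|x|²)) sup_{s ≥ |x|} ε(s)` for all `|x| ≥ r₀`. -/
theorem stmt14 (r₀ : ℝ) (hr₀ : 0 < r₀) (u : EuclideanSpace ℝ (Fin 3) → ℝ)
    (hu : ContDiffOn ℝ 1 u {x : EuclideanSpace ℝ (Fin 3) | r₀ ≤ ‖x‖})
    (hulim : Tendsto u (Filter.comap (fun x : EuclideanSpace ℝ (Fin 3) => ‖x‖) atTop)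
      (nhds 0))
    (ε : ℝ → ℝ) (hε0 : ∀ s, r₀ ≤ s → 0 ≤ ε s)
    (B : ℝ) (hεB : ∀ s, r₀ ≤ s → ε s ≤ B)
    (hgrad : ∀ x : EuclideanSpace ℝ (Fin 3), r₀ ≤ ‖x‖ →
      (inner ℝ x (gradient u x) : ℝ) ≤ ε ‖x‖ * (‖x‖ ^ 2)⁻¹) :
    ∀ x : EuclideanSpace ℝ (Fin 3), r₀ ≤ ‖x‖ →
      -(1 / (2 * ‖x‖ ^ 2)) * sSup (ε '' Set.Ici ‖x‖) ≤ u x := by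
  intro x hx
  set a := ‖x‖ with ha
  have ha0 : 0 < a := lt_of_lt_of_le hr₀ hx
  set M : ℝ := sSup (ε '' Set.Ici a) with hM
  have hbdd : BddAbove (ε '' Set.Ici a) := by
    refine ⟨B, ?_⟩
    rintro _ ⟨s, hs, rfl⟩
    exact hεB s (le_trans hx hs)
  have hεM : ∀ t, a ≤ t → ε t ≤ M := fun t ht => le_csSup hbdd ⟨t, ht, rfl⟩
  have hM0 : 0 ≤ M := le_trans (hε0 a hx) (hεM a le_rfl)
  set v : EuclideanSpace ℝ (Fin 3) := a⁻¹ • x with hv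
  have hvnorm : ‖v‖ = 1 := by
    rw [hv, norm_smul, norm_inv, Real.norm_eq_abs, abs_of_pos ha0, ← ha,
      inv_mul_cancel₀ ha0.ne']
  have hnorm_tv : ∀ t : ℝ, a ≤ t → ‖t • v‖ = t := by
    intro t ht
    rw [norm_smul, hvnorm, mul_one, Real.norm_eq_abs, abs_of_pos (lt_of_lt_of_le ha0 ht)]
  have hav : a • v = x := by
    rw [hv, smul_smul, mul_inv_cancel₀ ha0.ne', one_smul]
  -- g
  set g : ℝ → ℝ := fun t => u (t • v) + M / 2 * (t ^ 2)⁻¹ with hg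
  -- differentiability of u at points of norm > r₀
  have hdiff : ∀ t : ℝ, a < t → HasDerivAt (fun s : ℝ => u (s • v))
      (inner ℝ (gradient u (t • v)) v : ℝ) t := by
    intro t ht
    have hyt : ‖t • v‖ = t := hnorm_tv t ht.le
    have hmem : {y : EuclideanSpace ℝ (Fin 3) | r₀ ≤ ‖y‖} ∈ nhds (t • v) := by
      have : {y : EuclideanSpace ℝ (Fin 3) | r₀ < ‖y‖} ∈ nhds (t • v) := by
        refine (isOpen_lt continuous_const continuous_norm).mem_nhds ?_
        simp only [Set.mem_setOf_eq, hyt]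
        exact lt_of_le_of_lt hx ht
      exact Filter.mem_of_superset this fun y hy => le_of_lt (Set.mem_setOf_eq ▸ hy)
    have hdu : DifferentiableAt ℝ u (t • v) :=
      ((hu.contDiffAt hmem).differentiableAt one_ne_zero)
    have h1 : HasGradientAt u (gradient u (t • v)) (t • v) := hdu.hasGradientAt
    have h2 : HasDerivAt (fun s : ℝ => s • v) v t := by
      simpa using (hasDerivAt_id t).smul_const v
    have := h1.hasFDerivAt.comp_hasDerivAt t h2
    simpa [InnerProductSpace.toDual_apply_apply, Function.comp_def] using this
  -- derivative of g on Ioi a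
  have hgderiv : ∀ t ∈ Set.Ioi a, HasDerivAt g
      ((inner ℝ (gradient u (t • v)) v : ℝ) + M / 2 * (-(2 * t) / (t ^ 2) ^ 2)) t := by
    intro t ht
    have ht' : a < t := ht
    have ht0 : (0:ℝ) < t := lt_trans ha0 ht'
    have h1 := hdiff t ht'
    have h2 : HasDerivAt (fun s : ℝ => (s ^ 2)⁻¹) (-(2 * t) / (t ^ 2) ^ 2) t := by
      have := (hasDerivAt_pow 2 t).inv (pow_ne_zero 2 ht0.ne')
      simpa [mul_comm, Pi.inv_def] using this
    exact h1.add ((h2.const_mul (M / 2)))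
  have hderiv_nonpos : ∀ t ∈ Set.Ioi a,
      (inner ℝ (gradient u (t • v)) v : ℝ) + M / 2 * (-(2 * t) / (t ^ 2) ^ 2) ≤ 0 := by
    intro t ht
    have ht' : a < t := ht
    have ht0 : (0:ℝ) < t := lt_trans ha0 ht'
    have hyt : ‖t • v‖ = t := hnorm_tv t ht'.le
    have hr : r₀ ≤ ‖t • v‖ := by rw [hyt]; exact le_trans hx ht'.le
    have hkey := hgrad (t • v) hr
    rw [hyt] at hkey
    have hiv : (inner ℝ (t • v) (gradient u (t • v)) : ℝ)
        = t * (inner ℝ (gradient u (t • v)) v : ℝ) := by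
      rw [real_inner_smul_left, real_inner_comm]
    rw [hiv] at hkey
    have hεt : ε t ≤ M := hεM t ht'.le
    have h3 : t * (inner ℝ (gradient u (t • v)) v : ℝ) ≤ M * (t ^ 2)⁻¹ := by
      refine le_trans hkey ?_
      have : (0:ℝ) < (t ^ 2)⁻¹ := by positivity
      nlinarith
    have h4 : (inner ℝ (gradient u (t • v)) v : ℝ) ≤ M * (t ^ 3)⁻¹ := by
      rw [← mul_le_mul_iff_of_pos_left ht0]
      calc t * (inner ℝ (gradient u (t • v)) v : ℝ) ≤ M * (t ^ 2)⁻¹ := h3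
        _ = t * (M * (t ^ 3)⁻¹) := by field_simp
    have h5 : M / 2 * (-(2 * t) / (t ^ 2) ^ 2) = -(M * (t ^ 3)⁻¹) := by
      field_simp
    rw [h5]; linarith
  -- g antitone on Ici a
  have hcont : ContinuousOn g (Set.Ici a) := by
    apply ContinuousOn.add
    · refine ContinuousOn.comp hu.continuousOn ?_ ?_
      · exact (continuous_id.smul continuous_const).continuousOn
      · intro t ht
        simp only [Set.mem_setOf_eq, hnorm_tv t ht]
        exact le_trans hx ht
    · refine ContinuousOn.mul continuousOn_const (ContinuousOn.inv₀ ?_ ?_)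
      · exact (continuous_pow 2).continuousOn
      · intro t ht
        exact pow_ne_zero 2 (lt_of_lt_of_le ha0 ht).ne'
  have hanti : AntitoneOn g (Set.Ici a) := by
    refine antitoneOn_of_hasDerivWithinAt_nonpos (f' := fun t => (inner ℝ (gradient u (t • v)) v : ℝ) + M / 2 * (-(2 * t) / (t ^ 2) ^ 2)) (convex_Ici a) hcont ?_ ?_
    · intro t ht
      rw [interior_Ici] at ht
      exact ((hgderiv t ht).hasDerivWithinAt)
    · intro t ht
      rw [interior_Ici] at ht
      exact hderiv_nonpos t ht
  -- limit of g at infinity is 0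
  have hlim : Tendsto g atTop (nhds 0) := by
    have h1 : Tendsto (fun t : ℝ => u (t • v)) atTop (nhds 0) := by
      refine hulim.comp ?_
      rw [Filter.tendsto_comap_iff]
      have : ∀ᶠ t : ℝ in atTop, ‖t • v‖ = t :=
        Filter.eventually_atTop.2 ⟨a, fun t ht => hnorm_tv t ht⟩
      exact Tendsto.congr' (by filter_upwards [this] with t ht using ht.symm) tendsto_id
    have h2 : Tendsto (fun t : ℝ => M / 2 * (t ^ 2)⁻¹) atTop (nhds 0) := by
      have : Tendsto (fun t : ℝ => (t ^ 2)⁻¹) atTop (nhds 0) := by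
        apply Tendsto.inv_tendsto_atTop
        exact tendsto_pow_atTop (by norm_num)
      simpa using this.const_mul (M / 2)
    simpa using h1.add h2
  have hge : 0 ≤ g a := by
    refine le_of_tendsto hlim ?_
    filter_upwards [Filter.eventually_ge_atTop a] with t ht
    exact hanti (Set.mem_Ici.2 le_rfl) (Set.mem_Ici.2 ht) ht
  have hge' : 0 ≤ u x + M / 2 * (a ^ 2)⁻¹ := by simpa [hg, hav] using hge
  have heq : -(1 / (2 * a ^ 2)) * M = -(M / 2 * (a ^ 2)⁻¹) := by field_simp
  linarith [hge']
end

section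
/- Let h : ℝ³ → ℝ be twice continuously differentiable on {x ∈ ℝ³ : |x| ≥ 1}, and suppose there is a constant C > 0 such that the operator norm of the Hessian satisfies ‖D²h(x)‖ ≤ C |x|^{−6} for all |x| ≥ 1. If |x|⁴ h(x) → 0 as |x| → ∞, then |x|⁵ |∇h(x)| → 0 as |x| → ∞. -/
open Real Filter

/-- If `h` is `C²` on `{|x| ≥ 1}` with Hessian of operator norm at most `C|x|⁻⁶` there,
and `|x|⁴ h(x) → 0` as `|x| → ∞`, then `|x|⁵|∇h(x)| → 0` as `|x| → ∞`. -/
theorem stmt15 (h : EuclideanSpace ℝ (Fin 3) → ℝ)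
    (hreg : ContDiffOn ℝ 2 h {x : EuclideanSpace ℝ (Fin 3) | 1 ≤ ‖x‖})
    (C : ℝ) (hC : 0 < C)
    (hHess : ∀ x : EuclideanSpace ℝ (Fin 3), 1 ≤ ‖x‖ →
      ‖fderiv ℝ (fun y : EuclideanSpace ℝ (Fin 3) => fderiv ℝ h y) x‖ ≤ C * (‖x‖ ^ 6)⁻¹)
    (hlim : Tendsto (fun x : EuclideanSpace ℝ (Fin 3) => ‖x‖ ^ 4 * h x)
      (Filter.comap (fun x : EuclideanSpace ℝ (Fin 3) => ‖x‖) atTop) (nhds 0)) :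
    Tendsto (fun x : EuclideanSpace ℝ (Fin 3) => ‖x‖ ^ 5 * ‖gradient h x‖)
      (Filter.comap (fun x : EuclideanSpace ℝ (Fin 3) => ‖x‖) atTop) (nhds 0) := by
  set U : Set (EuclideanSpace ℝ (Fin 3)) := {x : EuclideanSpace ℝ (Fin 3) | 1 < ‖x‖} with hUdef
  have hUopen : IsOpen U := isOpen_lt continuous_const continuous_norm
  have hregU : ContDiffOn ℝ 2 h U := hreg.mono (fun z hz => le_of_lt (show (1:ℝ) < ‖z‖ from hz))
  have hsplit := (contDiffOn_succ_iff_fderiv_of_isOpen (f := h) (n := 1) hUopen).1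
    (by exact_mod_cast hregU)
  have hd1 : ∀ z : EuclideanSpace ℝ (Fin 3), 1 < ‖z‖ → DifferentiableAt ℝ h z := fun z hz =>
    (hsplit.1.differentiableAt (hUopen.mem_nhds hz))
  have hd2 : ∀ z : EuclideanSpace ℝ (Fin 3), 1 < ‖z‖ → DifferentiableAt ℝ (fun y => fderiv ℝ h y) z := by
    intro z hz
    have := hsplit.2.2.differentiableOn (by norm_num)
    exact this.differentiableAt (hUopen.mem_nhds hz)
  rw [Metric.tendsto_nhds] at hlim ⊢
  intro ε hε
  set δ : ℝ := min (1/2) (ε / (256 * C)) with hδdef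
  have hδpos : 0 < δ := lt_min (by norm_num) (div_pos hε (by linarith))
  have hδhalf : δ ≤ 1/2 := min_le_left _ _
  have hδC : 64 * C * δ ≤ ε / 4 := by
    have h1 : δ ≤ ε / (256 * C) := min_le_right _ _
    calc 64 * C * δ ≤ 64 * C * (ε / (256 * C)) := by
          apply mul_le_mul_of_nonneg_left h1; positivity
      _ = ε / 4 := by field_simp; ring
  set ε' : ℝ := ε * δ / 100 with hε'def
  have hε'pos : 0 < ε' := by positivity
  have hev := hlim ε' hε'pos
  rw [Filter.eventually_comap, Filter.eventually_atTop] at hev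
  obtain ⟨R₀, hR₀⟩ := hev
  have H : ∀ z : EuclideanSpace ℝ (Fin 3), R₀ ≤ ‖z‖ → |‖z‖ ^ 4 * h z| < ε' := by
    intro z hz
    have h0 := hR₀ ‖z‖ hz z rfl
    rwa [Real.dist_eq, sub_zero] at h0
  rw [Filter.eventually_comap, Filter.eventually_atTop]
  refine ⟨max (2 * R₀) 4, fun b hb x hx => ?_⟩
  subst hx
  have hx4 : (4 : ℝ) ≤ ‖x‖ := le_trans (le_max_right _ _) hb
  have hxR : 2 * R₀ ≤ ‖x‖ := le_trans (le_max_left _ _) hb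
  have hxpos : (0 : ℝ) < ‖x‖ := by linarith
  rw [Real.dist_eq, sub_zero, abs_of_nonneg (by positivity)]
  rcases eq_or_ne (gradient h x) 0 with hg0 | hg0
  · rw [hg0]; simpa using hε
  set g : EuclideanSpace ℝ (Fin 3) := gradient h x with hgdef
  have hgn : 0 < ‖g‖ := norm_pos_iff.2 hg0
  set v : EuclideanSpace ℝ (Fin 3) := ‖g‖⁻¹ • g with hvdef
  have hvnorm : ‖v‖ = 1 := by
    rw [hvdef, norm_smul, norm_inv, norm_norm, inv_mul_cancel₀ (ne_of_gt hgn)]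
  set t : ℝ := δ * ‖x‖ with htdef
  have htpos : 0 < t := mul_pos hδpos hxpos
  have hthalf : t ≤ ‖x‖ / 2 := by
    rw [htdef]
    calc δ * ‖x‖ ≤ (1/2) * ‖x‖ := mul_le_mul_of_nonneg_right hδhalf (le_of_lt hxpos)
      _ = ‖x‖ / 2 := by ring
  set y : EuclideanSpace ℝ (Fin 3) := x + t • v with hydef
  have hyx : ‖y - x‖ = t := by
    rw [hydef, add_sub_cancel_left, norm_smul, hvnorm, mul_one,
      Real.norm_eq_abs, abs_of_pos htpos]
  have hball : ∀ z : EuclideanSpace ℝ (Fin 3), z ∈ Metric.closedBall x t → ‖x‖ / 2 ≤ ‖z‖ := by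
    intro z hz
    rw [Metric.mem_closedBall] at hz
    have h1 : ‖x‖ - ‖z‖ ≤ ‖x - z‖ := norm_sub_norm_le x z
    have h2 : ‖x - z‖ = dist z x := by rw [dist_eq_norm, norm_sub_rev]
    linarith [h2 ▸ h1]
  have hballU : ∀ z : EuclideanSpace ℝ (Fin 3), z ∈ Metric.closedBall x t → 1 < ‖z‖ := by
    intro z hz; have := hball z hz; linarith
  set M : ℝ := 64 * C * (‖x‖ ^ 6)⁻¹ with hMdef
  have hMnn : 0 ≤ M := by positivity
  have hHb : ∀ z ∈ Metric.closedBall x t,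
      ‖fderiv ℝ (fun y => fderiv ℝ h y) z‖ ≤ M := by
    intro z hz
    refine le_trans (hHess z (le_of_lt (hballU z hz))) ?_
    rw [hMdef]
    have hz2 : ‖x‖ / 2 ≤ ‖z‖ := hball z hz
    have hp : (‖x‖ / 2) ^ 6 ≤ ‖z‖ ^ 6 := pow_le_pow_left₀ (by positivity) hz2 _
    have hpos2 : (0:ℝ) < (‖x‖/2)^6 := by positivity
    have hinv : (‖z‖ ^ 6)⁻¹ ≤ ((‖x‖ / 2) ^ 6)⁻¹ := inv_anti₀ hpos2 hp
    calc C * (‖z‖ ^ 6)⁻¹ ≤ C * ((‖x‖ / 2) ^ 6)⁻¹ :=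
          mul_le_mul_of_nonneg_left hinv (le_of_lt hC)
      _ = 64 * C * (‖x‖ ^ 6)⁻¹ := by
          have hne : ‖x‖ ≠ 0 := ne_of_gt hxpos
          field_simp
          ring
  have hconv : Convex ℝ (Metric.closedBall x t) := convex_closedBall x t
  have hx0 : x ∈ Metric.closedBall x t := Metric.mem_closedBall_self (le_of_lt htpos)
  have hLip : ∀ z ∈ Metric.closedBall x t, ‖fderiv ℝ h z - fderiv ℝ h x‖ ≤ M * t := by
    intro z hz
    have h1 := hconv.norm_image_sub_le_of_norm_fderiv_le
      (f := fun y => fderiv ℝ h y) (C := M)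
      (fun w hw => hd2 w (hballU w hw)) hHb hx0 hz
    refine le_trans h1 (mul_le_mul_of_nonneg_left ?_ hMnn)
    rw [← dist_eq_norm]; exact hz
  have hy0 : y ∈ Metric.closedBall x t := by
    rw [Metric.mem_closedBall, dist_eq_norm, hyx]
  have hTaylor : ‖h y - h x - fderiv ℝ h x (y - x)‖ ≤ M * t * t := by
    have h1 := hconv.norm_image_sub_le_of_norm_fderiv_le' (f := h) (φ := fderiv ℝ h x)
      (C := M * t) (fun w hw => hd1 w (hballU w hw)) hLip hx0 hy0
    rwa [hyx] at h1
  have hfg : fderiv ℝ h x (y - x) = t * ‖g‖ := by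
    have h1 : fderiv ℝ h x = InnerProductSpace.toDual ℝ (EuclideanSpace ℝ (Fin 3)) g := by
      rw [hgdef, gradient, LinearIsometryEquiv.apply_symm_apply]
    rw [hydef, add_sub_cancel_left, h1, map_smul]
    rw [smul_eq_mul, InnerProductSpace.toDual_apply_apply, hvdef,
      real_inner_smul_right, real_inner_self_eq_norm_sq]
    field_simp
  have hkey : t * ‖g‖ ≤ |h y| + |h x| + M * t * t := by
    have h2 : |h y - h x - fderiv ℝ h x (y - x)| ≤ M * t * t := by
      rwa [Real.norm_eq_abs] at hTaylor
    have h3 : |fderiv ℝ h x (y - x)| - |h y - h x| ≤ |h y - h x - fderiv ℝ h x (y - x)| := by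
      calc |fderiv ℝ h x (y - x)| - |h y - h x|
          ≤ |fderiv ℝ h x (y - x) - (h y - h x)| := abs_sub_abs_le_abs_sub _ _
        _ = |h y - h x - fderiv ℝ h x (y - x)| := abs_sub_comm _ _
    have h4 : |h y - h x| ≤ |h y| + |h x| := abs_sub _ _
    have h5 : t * ‖g‖ = |fderiv ℝ h x (y - x)| := by
      rw [hfg, abs_of_nonneg (by positivity)]
    linarith
  have hxR0 : R₀ ≤ ‖x‖ := by
    rcases le_or_gt R₀ 0 with hr | hr
    · linarith
    · linarith
  have hhx : |h x| * ‖x‖ ^ 4 < ε' := by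
    have h1 := H x hxR0
    calc |h x| * ‖x‖ ^ 4 = |‖x‖ ^ 4 * h x| := by
          rw [abs_mul, abs_of_nonneg (by positivity : (0:ℝ) ≤ ‖x‖ ^ 4)]; ring
      _ < ε' := h1
  have hyhalf : ‖x‖ / 2 ≤ ‖y‖ := hball y hy0
  have hyR0 : R₀ ≤ ‖y‖ := by linarith
  have hhy : |h y| * ‖x‖ ^ 4 ≤ 16 * ε' := by
    have h1 := H y hyR0
    have h2 : |h y| * ‖y‖ ^ 4 < ε' := by
      calc |h y| * ‖y‖ ^ 4 = |‖y‖ ^ 4 * h y| := by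
            rw [abs_mul, abs_of_nonneg (by positivity : (0:ℝ) ≤ ‖y‖ ^ 4)]; ring
        _ < ε' := h1
    have h3 : ‖x‖ ^ 4 ≤ 16 * ‖y‖ ^ 4 := by
      have h5 : (‖x‖ / 2) ^ 4 ≤ ‖y‖ ^ 4 := pow_le_pow_left₀ (by positivity) hyhalf _
      have h6 : (‖x‖ / 2) ^ 4 = ‖x‖ ^ 4 / 16 := by ring
      linarith
    calc |h y| * ‖x‖ ^ 4 ≤ |h y| * (16 * ‖y‖ ^ 4) :=
          mul_le_mul_of_nonneg_left h3 (abs_nonneg _)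
      _ = 16 * (|h y| * ‖y‖ ^ 4) := by ring
      _ ≤ 16 * ε' := by linarith
  have hmain : ‖x‖ ^ 5 * ‖g‖ ≤ (|h y| + |h x|) * ‖x‖ ^ 4 / δ + 64 * C * δ := by
    have hne : ‖x‖ ≠ 0 := ne_of_gt hxpos
    have hδne : δ ≠ 0 := ne_of_gt hδpos
    calc ‖x‖ ^ 5 * ‖g‖ = (‖x‖ ^ 5 / t) * (t * ‖g‖) := by
          field_simp
      _ ≤ (‖x‖ ^ 5 / t) * (|h y| + |h x| + M * t * t) := by
          apply mul_le_mul_of_nonneg_left hkey (by positivity)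
      _ = (|h y| + |h x|) * ‖x‖ ^ 4 / δ + 64 * C * δ := by
          rw [htdef, hMdef]
          field_simp
  have hterm1 : (|h y| + |h x|) * ‖x‖ ^ 4 / δ ≤ 17 * ε / 100 := by
    have hsum : (|h y| + |h x|) * ‖x‖ ^ 4 ≤ 17 * ε' := by
      rw [add_mul]; linarith
    rw [div_le_iff₀ hδpos]
    have : 17 * ε' = 17 * ε / 100 * δ := by rw [hε'def]; ring
    linarith
  calc ‖x‖ ^ 5 * ‖g‖ ≤ (|h y| + |h x|) * ‖x‖ ^ 4 / δ + 64 * C * δ := hmain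
    _ ≤ 17 * ε / 100 + ε / 4 := by linarith
    _ < ε := by linarith
end

section
/- Let S : (0,∞) → ℝ be smooth and suppose that for every nonnegative integer l there is a constant C_l > 0 with |S^{(l)}(s)| ≤ C_l s^{−4−l} for all s > 0. Define Ψ(s) = s^{−1} ∫_s^∞ (t − s) t S(t) dt. Then: (i) Ψ is well defined and smooth on (0,∞); (ii) Ψ''(s) + 2 s^{−1} Ψ'(s) = S(s) for all s > 0, equivalently, the radial function x ↦ Ψ(|x|) on ℝ³ ∖ {0} has Euclidean Laplacian equal to S(|x|); (iii) for every nonnegative integer l there is a constant C'_l > 0 with |Ψ^{(l)}(s)| ≤ C'_l s^{−2−l} for all s > 0. -/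
open Real MeasureTheory

section StmtAux

open Topology ContDiff

/-- integrability from a `C t⁻²` bound on `Ioi s`. -/
lemma aux_integrableOn (f : ℝ → ℝ) (hf : ContinuousOn f (Set.Ioi 0)) {C s : ℝ}
    (hs : 0 < s) (hC : ∀ t, s < t → |f t| ≤ C * (t ^ 2)⁻¹) :
    IntegrableOn f (Set.Ioi s) := by
  have hsub : Set.Ioi s ⊆ Set.Ioi 0 := Set.Ioi_subset_Ioi hs.le
  have hmeas : AEStronglyMeasurable f (volume.restrict (Set.Ioi s)) :=
    (hf.mono hsub).aestronglyMeasurable measurableSet_Ioi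
  have hg : IntegrableOn (fun t : ℝ => C * t ^ (-2 : ℝ)) (Set.Ioi s) :=
    (integrableOn_Ioi_rpow_of_lt (by norm_num) hs).const_mul C
  refine Integrable.mono' hg hmeas ?_
  rw [ae_restrict_iff' measurableSet_Ioi]
  filter_upwards with t ht
  have ht0 : (0:ℝ) < t := hs.trans ht
  have : t ^ (-2 : ℝ) = (t ^ 2)⁻¹ := by
    rw [show (-2:ℝ) = -((2:ℕ):ℝ) by norm_num, Real.rpow_neg ht0.le, Real.rpow_natCast]
  rw [Real.norm_eq_abs, this]
  exact hC t ht

lemma aux_integral_bound (f : ℝ → ℝ) {C s : ℝ}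
    (hs : 0 < s) (hC : ∀ t, s < t → |f t| ≤ C * (t ^ 2)⁻¹) :
    |∫ t in Set.Ioi s, f t| ≤ C * s⁻¹ := by
  have hg : IntegrableOn (fun t : ℝ => C * t ^ (-2 : ℝ)) (Set.Ioi s) :=
    (integrableOn_Ioi_rpow_of_lt (by norm_num) hs).const_mul C
  have hb : ∀ᵐ t ∂(volume.restrict (Set.Ioi s)), ‖f t‖ ≤ C * t ^ (-2 : ℝ) := by
    rw [ae_restrict_iff' measurableSet_Ioi]
    filter_upwards with t ht
    have ht0 : (0:ℝ) < t := hs.trans ht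
    have : t ^ (-2 : ℝ) = (t ^ 2)⁻¹ := by
      rw [show (-2:ℝ) = -((2:ℕ):ℝ) by norm_num, Real.rpow_neg ht0.le, Real.rpow_natCast]
    rw [Real.norm_eq_abs, this]
    exact hC t ht
  have h1 : ‖∫ t in Set.Ioi s, f t‖ ≤ ∫ t in Set.Ioi s, C * t ^ (-2 : ℝ) :=
    norm_integral_le_of_norm_le hg hb
  have h2 : ∫ t in Set.Ioi s, C * t ^ (-2 : ℝ) = C * s⁻¹ := by
    rw [MeasureTheory.integral_const_mul, integral_Ioi_rpow_of_lt (by norm_num) hs]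
    norm_num
    rw [show (-1:ℝ) = -((1:ℕ):ℝ) by norm_num, Real.rpow_neg hs.le, Real.rpow_natCast]
    simp
  rw [Real.norm_eq_abs] at h1
  linarith [h1, h2.le, h2.ge]

lemma aux_split (f : ℝ → ℝ) {a u : ℝ} (hau : a ≤ u) (hint : IntegrableOn f (Set.Ioi a)) :
    ∫ t in Set.Ioi a, f t = (∫ t in Set.Ioc a u, f t) + ∫ t in Set.Ioi u, f t := by
  rw [← Set.Ioc_union_Ioi_eq_Ioi hau]
  exact setIntegral_union (Set.Ioc_disjoint_Ioi le_rfl) measurableSet_Ioi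
    (hint.mono_set Set.Ioc_subset_Ioi_self)
    (hint.mono_set (Set.Ioi_subset_Ioi hau))

lemma aux_hasDeriv (f : ℝ → ℝ) (hf : ContinuousOn f (Set.Ioi 0))
    (hint : ∀ u > (0:ℝ), IntegrableOn f (Set.Ioi u)) {s : ℝ} (hs : 0 < s) :
    HasDerivAt (fun u => ∫ t in Set.Ioi u, f t) (-f s) s := by
  set a := s / 2 with ha_def
  have ha : 0 < a := by positivity
  have has : a < s := by rw [ha_def]; linarith
  have hInt : IntervalIntegrable f volume a s := by
    rw [intervalIntegrable_iff_integrableOn_Ioc_of_le has.le]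
    exact (hint a ha).mono_set Set.Ioc_subset_Ioi_self
  have hmeas : StronglyMeasurableAtFilter f (𝓝 s) volume :=
    hf.stronglyMeasurableAtFilter isOpen_Ioi _ hs
  have hcont : ContinuousAt f s := hf.continuousAt (isOpen_Ioi.mem_nhds hs)
  have hF : HasDerivAt (fun u => ∫ t in a..u, f t) (f s) s :=
    intervalIntegral.integral_hasDerivAt_right hInt hmeas hcont
  have hG : HasDerivAt (fun u => (∫ t in Set.Ioi a, f t) - ∫ t in a..u, f t) (-f s) s := by
    have h := (hasDerivAt_const s (∫ t in Set.Ioi a, f t)).sub hF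
    rw [zero_sub] at h
    exact h
  refine hG.congr_of_eventuallyEq ?_
  filter_upwards [isOpen_Ioi.mem_nhds has] with u (hu : a < u)
  rw [intervalIntegral.integral_of_le hu.le, aux_split f hu.le (hint a ha)]
  ring

/-- symbol class of order `-n` on `(0,∞)` (iterated-derivative decay). -/
def SymD (n : ℤ) (f : ℝ → ℝ) : Prop :=
  ∀ l : ℕ, ∃ C > 0, ∀ s > (0:ℝ), |iteratedDerivWithin l f (Set.Ioi 0) s| ≤ C * s ^ (-(n + l) : ℤ)

lemma symD_congr {n : ℤ} {f g : ℝ → ℝ} (hfg : Set.EqOn f g (Set.Ioi 0)) (hf : SymD n f) :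
    SymD n g := by
  intro l
  obtain ⟨C, hC, hb⟩ := hf l
  exact ⟨C, hC, fun s hs => by
    rw [← iteratedDerivWithin_congr hfg hs]; exact hb s hs⟩

lemma symD_neg {n : ℤ} {f : ℝ → ℝ} (hf : SymD n f) : SymD n (fun s => -f s) := by
  intro l
  obtain ⟨C, hC, hb⟩ := hf l
  exact ⟨C, hC, fun s hs => by
    rw [show (fun s => -f s) = -f from rfl, iteratedDerivWithin_neg, abs_neg]
    exact hb s hs⟩

lemma symD_mul {a b : ℤ} {f g : ℝ → ℝ} (hf : ContDiffOn ℝ (⊤ : ℕ∞) f (Set.Ioi 0))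
    (hg : ContDiffOn ℝ (⊤ : ℕ∞) g (Set.Ioi 0)) (ha : SymD a f) (hb : SymD b g) :
    SymD (a + b) (fun s => f s * g s) := by
  intro l
  choose Cf hCf hCfb using ha
  choose Cg hCg hCgb using hb
  set C : ℝ := ∑ i ∈ Finset.range (l + 1), (l.choose i : ℝ) * Cf i * Cg (l - i) with hC_def
  have hCpos : 0 < C := by
    refine Finset.sum_pos (fun i hi => ?_) ⟨0, Finset.mem_range.2 (Nat.succ_pos l)⟩
    have hch : 0 < (l.choose i : ℝ) := by
      exact_mod_cast Nat.choose_pos (Nat.lt_succ_iff.mp (Finset.mem_range.mp hi))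
    exact mul_pos (mul_pos hch (hCf i)) (hCg (l - i))
  refine ⟨C, hCpos, fun s hs => ?_⟩
  have key : ‖iteratedFDerivWithin ℝ l (fun y => f y * g y) (Set.Ioi 0) s‖ ≤
      ∑ i ∈ Finset.range (l + 1), (l.choose i : ℝ) *
        ‖iteratedFDerivWithin ℝ i f (Set.Ioi 0) s‖ *
        ‖iteratedFDerivWithin ℝ (l - i) g (Set.Ioi 0) s‖ :=
    norm_iteratedFDerivWithin_mul_le hf hg (uniqueDiffOn_Ioi 0) hs (by exact_mod_cast le_top)
  rw [norm_iteratedFDerivWithin_eq_norm_iteratedDerivWithin, Real.norm_eq_abs] at key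
  have key2 : ∑ i ∈ Finset.range (l + 1), (l.choose i : ℝ) *
        ‖iteratedFDerivWithin ℝ i f (Set.Ioi 0) s‖ *
        ‖iteratedFDerivWithin ℝ (l - i) g (Set.Ioi 0) s‖ ≤ C * s ^ (-(a + b + l) : ℤ) := by
    rw [hC_def, Finset.sum_mul]
    refine Finset.sum_le_sum fun i hi => ?_
    have hil : i ≤ l := Nat.lt_succ_iff.mp (Finset.mem_range.mp hi)
    rw [norm_iteratedFDerivWithin_eq_norm_iteratedDerivWithin, Real.norm_eq_abs,
      norm_iteratedFDerivWithin_eq_norm_iteratedDerivWithin, Real.norm_eq_abs]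
    have h1 := hCfb i s hs
    have h2 := hCgb (l - i) s hs
    have hz : s ^ (-(a + i) : ℤ) * s ^ (-(b + (l - i : ℕ)) : ℤ) = s ^ (-(a + b + l) : ℤ) := by
      rw [← zpow_add₀ (ne_of_gt hs)]
      congr 1
      have : ((l - i : ℕ) : ℤ) = (l : ℤ) - i := by
        exact_mod_cast Int.ofNat_sub hil
      rw [this]; ring
    calc (l.choose i : ℝ) * |iteratedDerivWithin i f (Set.Ioi 0) s| *
          |iteratedDerivWithin (l - i) g (Set.Ioi 0) s|
        ≤ (l.choose i : ℝ) * (Cf i * s ^ (-(a + i) : ℤ)) *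
            (Cg (l - i) * s ^ (-(b + (l - i : ℕ)) : ℤ)) := by
          have hci : (0:ℝ) ≤ (l.choose i : ℝ) := Nat.cast_nonneg _
          have p1 : (0:ℝ) ≤ Cf i * s ^ (-(a + i) : ℤ) :=
            (mul_pos (hCf i) (zpow_pos hs _)).le
          exact mul_le_mul (mul_le_mul_of_nonneg_left h1 hci) h2 (abs_nonneg _)
            (mul_nonneg hci p1)
      _ = (l.choose i : ℝ) * Cf i * Cg (l - i) * s ^ (-(a + b + l) : ℤ) := by
          rw [← hz]; ring
  calc |iteratedDerivWithin l (fun y => f y * g y) (Set.Ioi 0) s| ≤ _ := key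
    _ ≤ C * s ^ (-(a + b + l) : ℤ) := key2

lemma symD_shift {n : ℤ} {f g : ℝ → ℝ}
    (hfg : Set.EqOn (derivWithin f (Set.Ioi 0)) g (Set.Ioi 0))
    (hg : SymD (n + 1) g)
    (h0 : ∃ C > 0, ∀ s > (0:ℝ), |f s| ≤ C * s ^ (-n : ℤ)) : SymD n f := by
  intro l
  match l with
  | 0 =>
    obtain ⟨C, hC, hb⟩ := h0
    exact ⟨C, hC, fun s hs => by
      rw [iteratedDerivWithin_zero]
      simpa using hb s hs⟩
  | l + 1 =>
    obtain ⟨C, hC, hb⟩ := hg l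
    refine ⟨C, hC, fun s hs => ?_⟩
    rw [iteratedDerivWithin_succ',
      iteratedDerivWithin_congr hfg (Set.mem_Ioi.mpr hs)]
    have := hb s hs
    have harg : (-(n + 1 + l) : ℤ) = (-(n + (l + 1 : ℕ)) : ℤ) := by push_cast; ring
    rwa [harg] at this

lemma symD_zpow (k : ℤ) : SymD (-k) (fun s : ℝ => s ^ k) := by
  have key : ∀ l : ℕ, Set.EqOn (iteratedDerivWithin l (fun s : ℝ => s ^ k) (Set.Ioi 0))
      (fun s => (∏ i ∈ Finset.range l, ((k - i : ℤ) : ℝ)) * s ^ (k - l)) (Set.Ioi 0) := by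
    intro l
    induction l with
    | zero => intro s hs; simp [iteratedDerivWithin_zero]
    | succ l IH =>
      intro s hs
      rw [iteratedDerivWithin_succ]
      rw [derivWithin_congr IH (IH hs)]
      rw [derivWithin_of_isOpen isOpen_Ioi hs]
      have hdz : HasDerivAt (fun u : ℝ => (∏ i ∈ Finset.range l, ((k - i : ℤ) : ℝ)) * u ^ (k - l))
          ((∏ i ∈ Finset.range l, ((k - i : ℤ) : ℝ)) * ((k - l : ℤ) * s ^ (k - l - 1))) s :=
        (hasDerivAt_zpow (k - l) s (Or.inl (ne_of_gt hs))).const_mul _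
      rw [hdz.deriv]
      rw [Finset.prod_range_succ]
      have : (k - (l + 1 : ℕ) : ℤ) = k - l - 1 := by push_cast; ring
      rw [this]
      push_cast
      ring
  intro l
  refine ⟨|∏ i ∈ Finset.range l, ((k - i : ℤ) : ℝ)| + 1, by positivity, fun s hs => ?_⟩
  rw [key l (Set.mem_Ioi.mpr hs)]
  rw [abs_mul, abs_of_pos (zpow_pos hs _)]
  have harg : (-(-k + l) : ℤ) = k - l := by ring
  rw [harg]
  have hp : (0:ℝ) < s ^ (k - (l:ℤ)) := zpow_pos hs _
  nlinarith [abs_nonneg (∏ i ∈ Finset.range l, ((k - i : ℤ) : ℝ))]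

end StmtAux

/-- Construction of the conformal factor correction with prescribed scalar-curvature
pulse: if `S` is smooth on `(0,∞)` with `|S^{(l)}(s)| ≤ C_l s^{−4−l}`, then
`Ψ(s) = s⁻¹ ∫_s^∞ (t−s) t S(t) dt` is well defined and smooth on `(0,∞)`, solves
`Ψ'' + 2s⁻¹Ψ' = S` there, and satisfies `|Ψ^{(l)}(s)| ≤ C'_l s^{−2−l}`. -/
theorem stmt16 (S : ℝ → ℝ) (hS : ContDiffOn ℝ (⊤ : ℕ∞) S (Set.Ioi 0))
    (hdecay : ∀ l : ℕ, ∃ C > 0, ∀ s > 0,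
      |iteratedDerivWithin l S (Set.Ioi 0) s| ≤ C * (s ^ (4 + l))⁻¹) :
    ∀ Ψ : ℝ → ℝ,
      (Ψ = fun s => s⁻¹ * ∫ t in Set.Ioi s, (t - s) * t * S t) →
      (∀ s > 0, IntegrableOn (fun t => (t - s) * t * S t) (Set.Ioi s)) ∧
      ContDiffOn ℝ (⊤ : ℕ∞) Ψ (Set.Ioi 0) ∧
      (∀ s > 0, derivWithin (derivWithin Ψ (Set.Ioi 0)) (Set.Ioi 0) s
          + 2 * s⁻¹ * derivWithin Ψ (Set.Ioi 0) s = S s) ∧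
      (∀ l : ℕ, ∃ C' > 0, ∀ s > 0,
        |iteratedDerivWithin l Ψ (Set.Ioi 0) s| ≤ C' * (s ^ (2 + l))⁻¹) := by
  intro Ψ hΨ
  have UD : UniqueDiffOn ℝ (Set.Ioi (0:ℝ)) := uniqueDiffOn_Ioi 0
  have hScont : ContinuousOn S (Set.Ioi 0) := hS.continuousOn
  obtain ⟨C₀, hC₀, hS0'⟩ := hdecay 0
  have hS0 : ∀ t > (0:ℝ), |S t| ≤ C₀ * (t ^ 4)⁻¹ := by
    intro t ht
    have := hS0' t ht
    simpa [iteratedDerivWithin_zero] using this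
  -- pointwise bounds
  have hb2 : ∀ t > (0:ℝ), |t ^ 2 * S t| ≤ C₀ * (t ^ 2)⁻¹ := by
    intro t ht
    rw [abs_mul, abs_of_pos (pow_pos ht 2)]
    calc t ^ 2 * |S t| ≤ t ^ 2 * (C₀ * (t ^ 4)⁻¹) := by
          exact mul_le_mul_of_nonneg_left (hS0 t ht) (pow_pos ht 2).le
      _ = C₀ * (t ^ 2)⁻¹ := by field_simp
  have hb1 : ∀ u > (0:ℝ), ∀ t, u < t → |t * S t| ≤ (C₀ * u⁻¹) * (t ^ 2)⁻¹ := by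
    intro u hu t ht
    have ht0 : (0:ℝ) < t := hu.trans ht
    rw [abs_mul, abs_of_pos ht0]
    have h1 : t * |S t| ≤ t * (C₀ * (t ^ 4)⁻¹) :=
      mul_le_mul_of_nonneg_left (hS0 t ht0) ht0.le
    have h2 : t * (C₀ * (t ^ 4)⁻¹) = C₀ * t⁻¹ * (t ^ 2)⁻¹ := by field_simp
    have h3 : C₀ * t⁻¹ * (t ^ 2)⁻¹ ≤ C₀ * u⁻¹ * (t ^ 2)⁻¹ := by
      have hti : t⁻¹ ≤ u⁻¹ := inv_anti₀ hu ht.le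
      have hp : (0:ℝ) ≤ (t ^ 2)⁻¹ := by positivity
      exact mul_le_mul_of_nonneg_right
        (mul_le_mul_of_nonneg_left hti hC₀.le) hp
    linarith [h1, h2.le, h2.ge]
  have hbg : ∀ s > (0:ℝ), ∀ t, s < t → |(t - s) * t * S t| ≤ C₀ * (t ^ 2)⁻¹ := by
    intro s hs t ht
    have ht0 : (0:ℝ) < t := hs.trans ht
    rw [abs_mul, abs_mul, abs_of_pos (sub_pos.mpr ht), abs_of_pos ht0]
    calc (t - s) * t * |S t| ≤ (t * t) * (C₀ * (t ^ 4)⁻¹) := by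
          have hts : t - s ≤ t := by linarith
          exact mul_le_mul (by nlinarith) (hS0 t ht0) (abs_nonneg _) (by positivity)
      _ = C₀ * (t ^ 2)⁻¹ := by field_simp
  -- continuity of integrands
  have hcont2 : ContinuousOn (fun t : ℝ => t ^ 2 * S t) (Set.Ioi 0) :=
    (continuous_pow 2).continuousOn.mul hScont
  have hcont1 : ContinuousOn (fun t : ℝ => t * S t) (Set.Ioi 0) :=
    continuous_id.continuousOn.mul hScont
  have hcontg : ∀ s : ℝ, ContinuousOn (fun t : ℝ => (t - s) * t * S t) (Set.Ioi 0) :=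
    fun s => (((continuous_id.sub continuous_const).mul continuous_id).continuousOn).mul hScont
  -- integrability
  have hint2 : ∀ u > (0:ℝ), IntegrableOn (fun t : ℝ => t ^ 2 * S t) (Set.Ioi u) :=
    fun u hu => aux_integrableOn _ hcont2 hu (fun t ht => hb2 t (hu.trans ht))
  have hint1 : ∀ u > (0:ℝ), IntegrableOn (fun t : ℝ => t * S t) (Set.Ioi u) :=
    fun u hu => aux_integrableOn _ hcont1 hu (hb1 u hu)
  have hintg : ∀ s > (0:ℝ), IntegrableOn (fun t : ℝ => (t - s) * t * S t) (Set.Ioi s) :=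
    fun s hs => aux_integrableOn _ (hcontg s) hs (hbg s hs)
  set A : ℝ → ℝ := fun u => ∫ t in Set.Ioi u, t ^ 2 * S t with hA_def
  set B : ℝ → ℝ := fun u => ∫ t in Set.Ioi u, t * S t with hB_def
  have hA : ∀ s > (0:ℝ), HasDerivAt A (-(s ^ 2 * S s)) s :=
    fun s hs => aux_hasDeriv _ hcont2 hint2 hs
  have hB : ∀ s > (0:ℝ), HasDerivAt B (-(s * S s)) s :=
    fun s hs => aux_hasDeriv _ hcont1 hint1 hs
  -- Ψ in terms of A and B
  have hAB : ∀ u > (0:ℝ), Ψ u = u⁻¹ * A u - B u := by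
    intro u hu
    rw [hΨ]
    have e0 : (∫ t in Set.Ioi u, (t - u) * t * S t)
        = ∫ t in Set.Ioi u, (t ^ 2 * S t - u * (t * S t)) := by
      congr 1; ext t; ring
    have e1 : (∫ t in Set.Ioi u, (t - u) * t * S t) = A u - u * B u := by
      rw [e0, integral_sub (hint2 u hu) ((hint1 u hu).const_mul u),
        MeasureTheory.integral_const_mul]
    simp only []
    rw [e1]
    field_simp
  -- derivative of Ψ
  have hΨd : ∀ s > (0:ℝ), HasDerivAt Ψ (-((s ^ 2)⁻¹ * A s)) s := by
    intro s hs
    have hf : HasDerivAt (fun u => u⁻¹ * A u - B u)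
        (-(s ^ 2)⁻¹ * A s + s⁻¹ * -(s ^ 2 * S s) - -(s * S s)) s :=
      ((hasDerivAt_inv hs.ne').mul (hA s hs)).sub (hB s hs)
    have he : -(s ^ 2)⁻¹ * A s + s⁻¹ * -(s ^ 2 * S s) - -(s * S s) = -((s ^ 2)⁻¹ * A s) := by
      field_simp
      ring
    rw [he] at hf
    refine hf.congr_of_eventuallyEq ?_
    filter_upwards [isOpen_Ioi.mem_nhds hs] with u hu
    exact hAB u hu
  have hDW : ∀ {f : ℝ → ℝ} {f' : ℝ} {s : ℝ}, s ∈ Set.Ioi (0:ℝ) → HasDerivAt f f' s →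
      derivWithin f (Set.Ioi 0) s = f' := by
    intro f f' s hs h
    rw [derivWithin_of_isOpen isOpen_Ioi hs]
    exact h.deriv
  have hΨw : ∀ s ∈ Set.Ioi (0:ℝ), derivWithin Ψ (Set.Ioi 0) s = -((s ^ 2)⁻¹ * A s) :=
    fun s hs => hDW hs (hΨd s hs)
  have hAdw : ∀ s ∈ Set.Ioi (0:ℝ), derivWithin A (Set.Ioi 0) s = -(s ^ 2 * S s) :=
    fun s hs => hDW hs (hA s hs)
  -- smoothness of A
  have hg2 : ContDiffOn ℝ (⊤ : ℕ∞) (fun s : ℝ => -(s ^ 2 * S s)) (Set.Ioi 0) :=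
    ((contDiff_id.pow 2).contDiffOn.mul hS).neg
  have hAcd : ContDiffOn ℝ (⊤ : ℕ∞) A (Set.Ioi 0) := by
    rw [contDiffOn_infty_iff_derivWithin UD]
    exact ⟨fun s hs => (hA s hs).differentiableAt.differentiableWithinAt,
      hg2.congr hAdw⟩
  have hinv2 : ContDiffOn ℝ (⊤ : ℕ∞) (fun s : ℝ => (s ^ 2)⁻¹) (Set.Ioi 0) :=
    (contDiff_id.pow 2).contDiffOn.inv (fun u hu => pow_ne_zero 2 (ne_of_gt hu))
  have hgΨ : ContDiffOn ℝ (⊤ : ℕ∞) (fun s : ℝ => -((s ^ 2)⁻¹ * A s)) (Set.Ioi 0) :=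
    (hinv2.mul hAcd).neg
  have hΨcd : ContDiffOn ℝ (⊤ : ℕ∞) Ψ (Set.Ioi 0) := by
    rw [contDiffOn_infty_iff_derivWithin UD]
    exact ⟨fun s hs => (hΨd s hs).differentiableAt.differentiableWithinAt,
      hgΨ.congr hΨw⟩
  -- the ODE
  have hODE : ∀ s > (0:ℝ), derivWithin (derivWithin Ψ (Set.Ioi 0)) (Set.Ioi 0) s
      + 2 * s⁻¹ * derivWithin Ψ (Set.Ioi 0) s = S s := by
    intro s hs
    have e1 : derivWithin (derivWithin Ψ (Set.Ioi 0)) (Set.Ioi 0) s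
        = derivWithin (fun u => -((u ^ 2)⁻¹ * A u)) (Set.Ioi 0) s :=
      derivWithin_congr hΨw (hΨw s hs)
    have hg : HasDerivAt (fun u : ℝ => -((u ^ 2)⁻¹ * A u))
        (-(-(↑2 * s ^ 1) / (s ^ 2) ^ 2 * A s + (s ^ 2)⁻¹ * -(s ^ 2 * S s))) s :=
      (((hasDerivAt_pow 2 s).inv (pow_ne_zero 2 hs.ne')).mul (hA s hs)).neg
    have e2 : derivWithin (fun u : ℝ => -((u ^ 2)⁻¹ * A u)) (Set.Ioi 0) s
        = -(-(↑2 * s ^ 1) / (s ^ 2) ^ 2 * A s + (s ^ 2)⁻¹ * -(s ^ 2 * S s)) :=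
      hDW hs hg
    rw [e1, e2, hΨw s hs]
    have hsne : s ≠ 0 := hs.ne'
    field_simp
    try ring
  -- decay estimates
  have hS4 : SymD 4 S := by
    intro l
    obtain ⟨C, hC, hb⟩ := hdecay l
    refine ⟨C, hC, fun s hs => ?_⟩
    have := hb s hs
    have e : (s : ℝ) ^ (-(4 + (l:ℤ))) = (s ^ (4 + l : ℕ))⁻¹ := by
      rw [zpow_neg]
      norm_cast
    rwa [e]
  have hsq : SymD (-2) (fun s : ℝ => s ^ 2) := by
    refine symD_congr (fun s _ => ?_) (symD_zpow 2)
    norm_cast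
  have hgA2 : SymD 2 (fun s : ℝ => -(s ^ 2 * S s)) := by
    have h := symD_neg (symD_mul (contDiff_id.pow 2).contDiffOn hS hsq hS4)
    rw [show (2:ℤ) = -2 + 4 by norm_num]
    exact h
  have hA0 : ∀ s > (0:ℝ), |A s| ≤ C₀ * s ^ (-1 : ℤ) := by
    intro s hs
    have := aux_integral_bound (fun t : ℝ => t ^ 2 * S t) hs
      (fun t ht => hb2 t (hs.trans ht))
    simpa [zpow_neg] using this
  have hA1 : SymD 1 A := by
    refine symD_shift (g := fun s : ℝ => -(s ^ 2 * S s)) hAdw ?_ ⟨C₀, hC₀, hA0⟩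
    have : (1:ℤ) + 1 = 2 := by norm_num
    rw [this]
    exact hgA2
  have hisq : SymD 2 (fun s : ℝ => (s ^ 2)⁻¹) := by
    have h : SymD 2 (fun s : ℝ => s ^ (-2 : ℤ)) := by
      rw [show (2:ℤ) = -(-2) by norm_num]
      exact symD_zpow (-2)
    refine symD_congr (fun s _ => ?_) h
    rw [zpow_neg]
    norm_cast
  have hgΨ3 : SymD 3 (fun s : ℝ => -((s ^ 2)⁻¹ * A s)) := by
    have h := symD_neg (symD_mul hinv2 hAcd hisq hA1)
    rw [show (3:ℤ) = 2 + 1 by norm_num]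
    exact h
  have hΨ0 : ∀ s > (0:ℝ), |Ψ s| ≤ C₀ * s ^ (-2 : ℤ) := by
    intro s hs
    have hI := aux_integral_bound (fun t : ℝ => (t - s) * t * S t) hs (hbg s hs)
    rw [hΨ]
    simp only []
    rw [abs_mul, abs_of_pos (inv_pos.mpr hs)]
    calc s⁻¹ * |∫ t in Set.Ioi s, (t - s) * t * S t| ≤ s⁻¹ * (C₀ * s⁻¹) :=
          mul_le_mul_of_nonneg_left hI (inv_pos.mpr hs).le
      _ = C₀ * s ^ (-2 : ℤ) := by
          rw [show (-2:ℤ) = -((2:ℕ):ℤ) by norm_num, zpow_neg, zpow_natCast, pow_two,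
            mul_inv]
          ring
  have hΨ2 : SymD 2 Ψ := by
    refine symD_shift (g := fun s : ℝ => -((s ^ 2)⁻¹ * A s)) hΨw ?_ ⟨C₀, hC₀, hΨ0⟩
    have : (2:ℤ) + 1 = 3 := by norm_num
    rw [this]
    exact hgΨ3
  refine ⟨hintg, hΨcd, hODE, ?_⟩
  intro l
  obtain ⟨C, hC, hb⟩ := hΨ2 l
  refine ⟨C, hC, fun s hs => ?_⟩
  have := hb s hs
  have e : (s : ℝ) ^ (-(2 + (l:ℤ))) = (s ^ (2 + l : ℕ))⁻¹ := by
    rw [zpow_neg]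
    norm_cast
  rwa [e] at this
end
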